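/- arXiv:1805.05328 — 5 statements merged into one kernel-verified Lean document; each statement's English description precedes it below -/
import Mathlib

section
/- For every 2-dimensional 0-1 matrix (or family of 2-dimensional 0-1 matrices) P and all positive integers k, m, n, L the following holds: if every collection of pairwise disjoint nonempty sets of cells ('letters') of the m×n grid, in which each letter consists of at least k cells all lying in a single column and the 2-dimensional 0-1 matrix whose ones are exactly the cells covered by the letters avoids P, has at most L letters, then ex(n,m,P) ≤ k(L+n). -/
/-! ### Multidimensional 0-1 matrices, represented as the finsets of their one-entries -/

/-- `M` contains `P`: there are coordinatewise strictly increasing maps sending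
every one of `P` to a one of `M`. -/
def MContains {d : ℕ} {mdims pdims : Fin d → ℕ}
    (M : Finset ((i : Fin d) → Fin (mdims i)))
    (P : Finset ((i : Fin d) → Fin (pdims i))) : Prop :=
  ∃ f : (i : Fin d) → (Fin (pdims i) → Fin (mdims i)),
    (∀ i, StrictMono (f i)) ∧ ∀ x ∈ P, (fun i => f i (x i)) ∈ M

/-- `ex(n, P, d)`: the maximum number of ones in a `P`-avoiding `d`-dimensional
0-1 matrix all of whose dimension lengths equal `n`. -/
noncomputable def exSq (n : ℕ) {d : ℕ} {pdims : Fin d → ℕ}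
    (P : Finset ((i : Fin d) → Fin (pdims i))) : ℕ :=
  sSup {k | ∃ M : Finset (Fin d → Fin n), ¬ MContains M P ∧ M.card = k}

/-- The groups `G 0, …, G (s-1)` form the structure of a `(P,s)`-formation:
each group has `P.card` ones, the tails (coordinates other than the first) of each group
form one common set which is a copy of `P` under strictly increasing maps, and the first
coordinates of the groups are strictly ordered between groups. -/
def FormationGroups {d : ℕ} {pdims : Fin d → ℕ}
    (P : Finset ((i : Fin d) → Fin (pdims i))) (s : ℕ) {mdims : Fin (d+1) → ℕ}
    (G : Fin s → Finset ((i : Fin (d+1)) → Fin (mdims i))) : Prop :=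
  (∀ a, (G a).card = P.card) ∧
  (∃ g : (i : Fin d) → (Fin (pdims i) → Fin (mdims i.succ)),
      (∀ i, StrictMono (g i)) ∧
      ∀ a, (G a).image Fin.tail = P.image (fun x => fun i => g i (x i))) ∧
  (∀ a b : Fin s, a < b → ∀ p ∈ G a, ∀ q ∈ G b, p 0 < q 0)

/-- `M` is a `(P,s)`-formation, i.e. a member of `F_{P,s}`. -/
def IsFormation {d : ℕ} {pdims : Fin d → ℕ}
    (P : Finset ((i : Fin d) → Fin (pdims i))) (s : ℕ) {mdims : Fin (d+1) → ℕ}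
    (M : Finset ((i : Fin (d+1)) → Fin (mdims i))) : Prop :=
  ∃ G : Fin s → Finset ((i : Fin (d+1)) → Fin (mdims i)),
    FormationGroups P s G ∧ M = Finset.univ.biUnion G

/-- `M` contains a `(P,s)`-formation, i.e. `M` contains some member of the family `F_{P,s}`. -/
def ContainsFormation {d : ℕ} {pdims : Fin d → ℕ}
    (P : Finset ((i : Fin d) → Fin (pdims i))) (s : ℕ) {mdims : Fin (d+1) → ℕ}
    (M : Finset ((i : Fin (d+1)) → Fin (mdims i))) : Prop :=
  ∃ G : Fin s → Finset ((i : Fin (d+1)) → Fin (mdims i)),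
    FormationGroups P s G ∧ ∀ a, G a ⊆ M

/-- `ex(n, F_{P,s}, d+1)`: the maximum number of ones in a `(d+1)`-dimensional 0-1 matrix
with all dimension lengths `n` avoiding every `(P,s)`-formation. -/
noncomputable def exFormation (n : ℕ) {d : ℕ} {pdims : Fin d → ℕ}
    (P : Finset ((i : Fin d) → Fin (pdims i))) (s : ℕ) : ℕ :=
  sSup {k | ∃ M : Finset (Fin (d+1) → Fin n), ¬ ContainsFormation P s M ∧ M.card = k}

/-- Dimension lengths of a box whose first dimension has length `m` and whose
other `d` dimensions have length `n`. -/
def BoxDims (d m n : ℕ) : Fin (d+1) → ℕ := Fin.cons m (fun _ => n)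

/-- `L` is a valid family of letters: pairwise disjoint nonempty sets of cells, each with
at least `k` cells all lying in a single 1-row. -/
def IsLetterFamily {d : ℕ} {mdims : Fin (d+1) → ℕ} (k : ℕ)
    (L : Finset (Finset ((i : Fin (d+1)) → Fin (mdims i)))) : Prop :=
  (∀ S ∈ L, S.Nonempty) ∧
  (∀ S ∈ L, ∀ T ∈ L, S ≠ T → Disjoint S T) ∧
  (∀ S ∈ L, k ≤ S.card ∧ ∃ t : (i : Fin d) → Fin (mdims i.succ), ∀ p ∈ S, Fin.tail p = t)

/-- `lx_k(n, m, F_{P,s}, d+1)`. -/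
noncomputable def lxFormation (n m : ℕ) {d : ℕ} {pdims : Fin d → ℕ}
    (P : Finset ((i : Fin d) → Fin (pdims i))) (s k : ℕ) : ℕ :=
  sSup {c | ∃ L : Finset (Finset ((i : Fin (d+1)) → Fin (BoxDims d m n i))),
    IsLetterFamily k L ∧ ¬ ContainsFormation P s (L.biUnion id) ∧ L.card = c}

/-! ### general families of multidimensional matrices -/

/-- `M` avoids every member of the family `F`. -/
def AvoidsFam {d : ℕ} {mdims : Fin d → ℕ} (M : Finset ((i : Fin d) → Fin (mdims i)))
    (F : (pdims : Fin d → ℕ) → Set (Finset ((i : Fin d) → Fin (pdims i)))) : Prop :=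
  ∀ pdims : Fin d → ℕ, ∀ P ∈ F pdims, ¬ MContains M P

/-- `ex(n, m, F, d)` with `d = e+1`. -/
noncomputable def exBox (n m e : ℕ)
    (F : (pdims : Fin (e+1) → ℕ) → Set (Finset ((i : Fin (e+1)) → Fin (pdims i)))) : ℕ :=
  sSup {k | ∃ M : Finset ((i : Fin (e+1)) → Fin (BoxDims e m n i)),
    AvoidsFam M F ∧ M.card = k}

/-- `lx_k(n, m, F, d)` with `d = e+1`. -/
noncomputable def lxBox (n m e k : ℕ)
    (F : (pdims : Fin (e+1) → ℕ) → Set (Finset ((i : Fin (e+1)) → Fin (pdims i)))) : ℕ :=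
  sSup {c | ∃ L : Finset (Finset ((i : Fin (e+1)) → Fin (BoxDims e m n i))),
    IsLetterFamily k L ∧ AvoidsFam (L.biUnion id) F ∧ L.card = c}

/-! ### 2-dimensional matrices (cells are (row, column) pairs) -/

def Contains2 {m n a b : ℕ} (M : Finset (Fin m × Fin n)) (P : Finset (Fin a × Fin b)) : Prop :=
  ∃ f : Fin a → Fin m, ∃ g : Fin b → Fin n,
    StrictMono f ∧ StrictMono g ∧ ∀ p ∈ P, (f p.1, g p.2) ∈ M

def Avoids2Fam {m n : ℕ} (M : Finset (Fin m × Fin n))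
    (F : (a : ℕ) → (b : ℕ) → Set (Finset (Fin a × Fin b))) : Prop :=
  ∀ a b : ℕ, ∀ P ∈ F a b, ¬ Contains2 M P

/-- `ex(n, m, F)` for a family `F` of 2-dimensional matrices: `m` rows, `n` columns. -/
noncomputable def ex2 (n m : ℕ) (F : (a : ℕ) → (b : ℕ) → Set (Finset (Fin a × Fin b))) : ℕ :=
  sSup {k | ∃ M : Finset (Fin m × Fin n), Avoids2Fam M F ∧ M.card = k}

/-- letters in a 2-dimensional grid: pairwise disjoint nonempty sets of cells, each with
at least `k` cells all lying in a single column. -/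
def IsLetterCol {m n : ℕ} (k : ℕ) (L : Finset (Finset (Fin m × Fin n))) : Prop :=
  (∀ S ∈ L, S.Nonempty) ∧
  (∀ S ∈ L, ∀ T ∈ L, S ≠ T → Disjoint S T) ∧
  (∀ S ∈ L, k ≤ S.card ∧ ∃ j : Fin n, ∀ p ∈ S, p.2 = j)

/-- `A_t`: the 2×t 0-1 matrix with ones exactly where the coordinate sum is even. -/
def Aform (t : ℕ) : Finset (Fin 2 × Fin t) :=
  Finset.univ.filter (fun p => Even ((p.1 : ℕ) + (p.2 : ℕ)))

/-! ### Ackermann hierarchy and related functions -/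

/-- `ackH j n` is `a_j(n)`: `a₁(n) = 2n` and `a_j(n)` is the `n`-fold iterate
of `a_{j-1}` applied to `1`. -/
def ackH : ℕ → ℕ → ℕ
  | 0, n => n
  | 1, n => 2 * n
  | j+2, n => (ackH (j+1))^[n] 1

/-- `α_j(n) = min {k ≥ 1 : a_j(k) ≥ n}`. -/
noncomputable def alphIdx (j n : ℕ) : ℕ := sInf {k | 1 ≤ k ∧ n ≤ ackH j k}

/-- inverse diagonal Ackermann function `α(n) = min {k ≥ 1 : A(k,k) ≥ n}`. -/
noncomputable def alphA (n : ℕ) : ℕ := sInf {k | 1 ≤ k ∧ n ≤ ack k k}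

/-- `R_s(j)`. -/
def Rform : ℕ → ℕ → ℤ
  | 0, _ => 0
  | 1, _ => 2
  | 2, _ => 3
  | _+3, 0 => 0
  | _+3, 1 => 0
  | t+3, 2 => 2 ^ (t+2) + 1
  | t+3, i+3 =>
      Rform (t+3) (i+2) * Rform (t+1) (i+3) + 2 * Rform (t+2) (i+3)
        - 3 * Rform (t+1) (i+3) - Rform (t+3) (i+2) + 2
termination_by s j => (s, j)

/-- `D_s(j)`. -/
def Dform : ℕ → ℕ → ℤ
  | 0, _ => 0
  | 1, _ => 0
  | 2, _ => 2
  | _+3, 0 => 0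
  | _+3, 1 => 0
  | t+3, 2 => 2 ^ (t+2) + 2 ^ (t+1) - 1
  | t+3, i+3 =>
      2 * Dform (t+2) (i+3) + (Dform (t+1) (i+3) + 1) * (Rform (t+3) (i+2) - 3)
        + Dform (t+3) (i+2) - Rform (t+3) (i+2) + 1
termination_by s j => (s, j)

/-- The ones of the 2-dimensional matrix `M` contain a doubled `(r,s)`-formation. -/
def ContainsDoubled (r s : ℕ) {m n : ℕ} (M : Finset (Fin m × Fin n)) : Prop :=
  ∃ S ⊆ M, ∃ b : Fin (s+1) → ℕ, Monotone b ∧ b 0 = 0 ∧ b (Fin.last s) = m ∧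
    ∃ C : Finset (Fin n), C.card = r ∧ (∀ p ∈ S, p.2 ∈ C) ∧
      S.card = r * (2 * s - 2) ∧
      ∀ c ∈ C, ∀ t : Fin s,
        (S.filter (fun p => p.2 = c ∧ b t.castSucc ≤ (p.1 : ℕ) ∧ (p.1 : ℕ) < b t.succ)).card
          = if (t : ℕ) = 0 ∨ (t : ℕ) = s - 1 then 1 else 2


lemma exists_blocks {α : Type*} [DecidableEq α] (k : ℕ) (hk : 0 < k) (S : Finset α) :
    ∃ B : Finset (Finset α),
      (∀ T ∈ B, T ⊆ S ∧ T.card = k) ∧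
      (∀ T ∈ B, ∀ T' ∈ B, T ≠ T' → Disjoint T T') ∧
      B.card = S.card / k := by
  classical
  set l := S.toList with hl
  have hnd : l.Nodup := S.nodup_toList
  have hlen : l.length = S.card := S.length_toList
  set f : ℕ → Finset α := fun i => ((l.drop (k*i)).take k).toFinset with hf
  have hsubl : ∀ i, ((l.drop (k*i)).take k).Sublist l := fun i =>
    (List.take_sublist _ _).trans (List.drop_sublist _ _)
  have hndT : ∀ i, ((l.drop (k*i)).take k).Nodup := fun i => hnd.sublist (hsubl i)
  have hsub : ∀ i, f i ⊆ S := by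
    intro i x hx
    simp only [hf, List.mem_toFinset] at hx
    exact Finset.mem_toList.mp ((hsubl i).mem hx)
  have hcard : ∀ i < S.card / k, (f i).card = k := by
    intro i hi
    have h1 : k * i + k ≤ S.card := by
      have h2 : k * (S.card / k) ≤ S.card := Nat.mul_div_le _ _
      have h3 : i + 1 ≤ S.card / k := hi
      nlinarith
    simp only [hf, List.card_toFinset, (hndT i).dedup, List.length_take,
      List.length_drop, hlen]
    omega
  have hdisj : ∀ i j, i < j → Disjoint (f i) (f j) := by
    intro i j hij
    rw [Finset.disjoint_left]
    intro x hxi hxj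
    simp only [hf, List.mem_toFinset] at hxi hxj
    have hd : List.Disjoint ((l.drop (k*i)).take k) ((l.drop (k*i)).drop k) :=
      List.disjoint_take_drop (hnd.sublist (List.drop_sublist _ _)) le_rfl
    have h1 : (l.drop (k*j)).Sublist (l.drop (k + k*i)) := by
      have hle : k + k*i ≤ k*j := by nlinarith
      have heq : l.drop (k*j) = (l.drop (k + k*i)).drop (k*j - (k + k*i)) := by
        rw [List.drop_drop]; congr 1; omega
      rw [heq]; exact List.drop_sublist _ _
    have hxj' : x ∈ (l.drop (k*i)).drop k := by
      rw [List.drop_drop, Nat.add_comm]; exact h1.mem (List.mem_of_mem_take hxj)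
    exact hd hxi hxj'
  refine ⟨(Finset.range (S.card/k)).image f, ?_, ?_, ?_⟩
  · intro T hT
    obtain ⟨i, hi, rfl⟩ := Finset.mem_image.mp hT
    exact ⟨hsub i, hcard i (Finset.mem_range.mp hi)⟩
  · intro T hT T' hT' hne
    obtain ⟨i, hi, rfl⟩ := Finset.mem_image.mp hT
    obtain ⟨j, hj, rfl⟩ := Finset.mem_image.mp hT'
    rcases lt_trichotomy i j with h | h | h
    · exact hdisj i j h
    · exact absurd (by rw [h]) hne
    · exact (hdisj j i h).symm
  · rw [Finset.card_image_of_injOn, Finset.card_range]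
    intro i hi j hj hij
    simp only [Finset.mem_coe, Finset.mem_range] at hi hj
    by_contra hne
    rcases lt_or_gt_of_ne hne with h | h
    · have := hdisj i j h
      rw [hij, disjoint_self] at this
      have : (f j).card = k := hcard j hj
      simp_all
      rcases this with h0 | h0
      · omega
      · have h5 := Nat.mul_div_le S.card k
        have h6 := Nat.mul_le_mul_left k (Nat.succ_le_of_lt hj)
        nlinarith [h5, h6]
    · have := hdisj j i h
      rw [hij, disjoint_self] at this
      have : (f j).card = k := hcard j hj
      simp_all
      rcases this with h0 | h0
      · omega
      · have h5 := Nat.mul_div_le S.card k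
        have h6 := Nat.mul_le_mul_left k (Nat.succ_le_of_lt hj)
        nlinarith [h5, h6]

/-- if every valid family of letters (each letter has at least `k` cells, all
in a single column) whose underlying 0-1 matrix avoids the family `F` has at most `L`
letters, then `ex(n, m, F) ≤ k (L + n)`. -/
theorem stmt0 (F : (a : ℕ) → (b : ℕ) → Set (Finset (Fin a × Fin b)))
    (k m n L : ℕ) (hk : 0 < k) (hm : 0 < m) (hn : 0 < n) (hL : 0 < L)
    (h : ∀ Ls : Finset (Finset (Fin m × Fin n)),
      IsLetterCol k Ls → Avoids2Fam (Ls.biUnion id) F → Ls.card ≤ L) :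
    ex2 n m F ≤ k * (L + n) := by
  apply csSup_le'
  rintro c ⟨M, hM, rfl⟩
  classical
  have hkey : ∀ j : Fin n, ∃ B : Finset (Finset (Fin m × Fin n)),
      (∀ T ∈ B, T ⊆ M.filter (fun p => p.2 = j) ∧ T.card = k) ∧
      (∀ T ∈ B, ∀ T' ∈ B, T ≠ T' → Disjoint T T') ∧
      B.card = (M.filter (fun p => p.2 = j)).card / k :=
    fun j => exists_blocks k hk _
  choose B hB1 hB2 hB3 using hkey
  set Ls : Finset (Finset (Fin m × Fin n)) := Finset.univ.biUnion B with hLsdef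
  have hmemcol : ∀ j, ∀ T ∈ B j, ∀ p ∈ T, p.2 = j := fun j T hT p hp =>
    (Finset.mem_filter.mp ((hB1 j T hT).1 hp)).2
  have hsubM : ∀ j, ∀ T ∈ B j, T ⊆ M := fun j T hT =>
    ((hB1 j T hT).1).trans (Finset.filter_subset _ _)
  have hne : ∀ j, ∀ T ∈ B j, T.Nonempty := fun j T hT =>
    Finset.card_pos.mp (by rw [(hB1 j T hT).2]; exact hk)
  have hLetters : IsLetterCol k Ls := by
    refine ⟨?_, ?_, ?_⟩
    · intro S hS
      obtain ⟨j, _, hSj⟩ := Finset.mem_biUnion.mp hS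
      exact hne j S hSj
    · intro S hS T hT hneq
      obtain ⟨j, _, hSj⟩ := Finset.mem_biUnion.mp hS
      obtain ⟨j', _, hTj⟩ := Finset.mem_biUnion.mp hT
      by_cases hjj : j = j'
      · subst hjj; exact hB2 j S hSj T hTj hneq
      · rw [Finset.disjoint_left]
        intro p hpS hpT
        exact hjj ((hmemcol j S hSj p hpS).symm.trans (hmemcol j' T hTj p hpT))
    · intro S hS
      obtain ⟨j, _, hSj⟩ := Finset.mem_biUnion.mp hS
      exact ⟨((hB1 j S hSj).2).ge, j, hmemcol j S hSj⟩
  have hsub : Ls.biUnion id ⊆ M := by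
    intro p hp
    obtain ⟨S, hS, hpS⟩ := Finset.mem_biUnion.mp hp
    obtain ⟨j, _, hSj⟩ := Finset.mem_biUnion.mp hS
    exact hsubM j S hSj hpS
  have hAv : Avoids2Fam (Ls.biUnion id) F := by
    intro a b P hP hc
    apply hM a b P hP
    obtain ⟨f, g, hf, hg, hfg⟩ := hc
    exact ⟨f, g, hf, hg, fun p hp => hsub (hfg p hp)⟩
  have hcardLs : Ls.card ≤ L := h Ls hLetters hAv
  have hdisjB : ∀ j ∈ (Finset.univ : Finset (Fin n)), ∀ j' ∈ Finset.univ, j ≠ j' →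
      Disjoint (B j) (B j') := by
    intro j _ j' _ hneq
    rw [Finset.disjoint_left]
    intro T hT hT'
    obtain ⟨p, hp⟩ := hne j T hT
    exact hneq ((hmemcol j T hT p hp).symm.trans (hmemcol j' T hT' p hp))
  have hLscard : Ls.card = ∑ j, (B j).card := Finset.card_biUnion hdisjB
  have hMcard : M.card = ∑ j, (M.filter (fun p => p.2 = j)).card :=
    Finset.card_eq_sum_card_fiberwise (fun p _ => Finset.mem_univ p.2)
  have hjbound : ∀ j : Fin n, (M.filter (fun p => p.2 = j)).card ≤ k * (B j).card + (k-1) := by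
    intro j
    rw [hB3 j]
    have h1 := Nat.div_add_mod (M.filter (fun p => p.2 = j)).card k
    have h2 := Nat.mod_lt (M.filter (fun p => p.2 = j)).card hk
    omega
  have hsum : M.card ≤ k * Ls.card + (k-1) * n := by
    rw [hMcard, hLscard, Finset.mul_sum]
    calc ∑ j, (M.filter (fun p => p.2 = j)).card
        ≤ ∑ j : Fin n, (k * (B j).card + (k-1)) := Finset.sum_le_sum (fun j _ => hjbound j)
      _ = (∑ j, k * (B j).card) + (k-1) * n := by
          rw [Finset.sum_add_distrib, Finset.sum_const, Finset.card_univ,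
            Fintype.card_fin, smul_eq_mul, Nat.mul_comm]
  calc M.card ≤ k * Ls.card + (k-1) * n := hsum
    _ ≤ k * L + k * n := by
        have := Nat.mul_le_mul_left k hcardLs
        have : (k-1) * n ≤ k * n := Nat.mul_le_mul_right n (Nat.sub_le k 1)
        omega
    _ = k * (L + n) := (Nat.mul_add k L n).symm
end

section
/- For every family F of d-dimensional 0-1 matrices and all positive integers k, m, n: ex(n,m,F,d) ≤ k·(lx_k(n,m,F,d) + n^{d−1}). -/
lemma chunk {α : Type*} [DecidableEq α] (k : ℕ) (hk : 0 < k) (R : Finset α) :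
    ∃ C : Finset (Finset α), (∀ S ∈ C, S.card = k ∧ S ⊆ R) ∧
      (∀ S ∈ C, ∀ T ∈ C, S ≠ T → Disjoint S T) ∧
      R.card ≤ k * C.card + (k - 1) := by
  induction R using Finset.strongInduction with
  | _ R ih =>
    by_cases h : R.card < k
    · exact ⟨∅, by simp, by simp, by omega⟩
    · push_neg at h
      obtain ⟨S, hSR, hScard⟩ := Finset.exists_subset_card_eq h
      have hSne : S.Nonempty := Finset.card_pos.mp (hScard ▸ hk)
      have hssub : R \ S ⊂ R := Finset.sdiff_ssubset hSR hSne
      obtain ⟨C', h1, h2, h3⟩ := ih _ hssub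
      have hSnot : S ∉ C' := by
        intro hS
        obtain ⟨x, hx⟩ := hSne
        exact (Finset.mem_sdiff.mp ((h1 S hS).2 hx)).2 hx
      refine ⟨insert S C', ?_, ?_, ?_⟩
      · intro T hT
        rcases Finset.mem_insert.mp hT with rfl | hT
        · exact ⟨hScard, hSR⟩
        · exact ⟨(h1 T hT).1, (h1 T hT).2.trans Finset.sdiff_subset⟩
      · have hSd : ∀ T ∈ C', Disjoint S T := fun T hT =>
          Finset.disjoint_left.mpr fun x hxS hxT =>
            (Finset.mem_sdiff.mp ((h1 T hT).2 hxT)).2 hxS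
        intro A hA B hB hAB
        rcases Finset.mem_insert.mp hA with hAS | hA
        · rcases Finset.mem_insert.mp hB with hBS | hB
          · exact absurd (hAS.trans hBS.symm) hAB
          · exact hAS ▸ hSd B hB
        · rcases Finset.mem_insert.mp hB with hBS | hB
          · exact hBS ▸ (hSd A hA).symm
          · exact h2 _ hA _ hB hAB
      · rw [Finset.card_insert_of_notMem hSnot]
        have hcd : (R \ S).card = R.card - k := by
          rw [Finset.card_sdiff_of_subset hSR, hScard]
        rw [hcd] at h3
        rw [Nat.mul_add, Nat.mul_one]
        set q := k * C'.card
        omega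

lemma avoidsFam_mono {d : ℕ} {mdims : Fin d → ℕ}
    {M M' : Finset ((i : Fin d) → Fin (mdims i))} (h : M' ⊆ M)
    (F : (pdims : Fin d → ℕ) → Set (Finset ((i : Fin d) → Fin (pdims i))))
    (hM : AvoidsFam M F) : AvoidsFam M' F := by
  intro pdims P hP hc
  obtain ⟨f, hf, hmem⟩ := hc
  exact hM pdims P hP ⟨f, hf, fun x hx => h (hmem x hx)⟩

theorem stmt3' (e : ℕ)
    (F : (pdims : Fin (e+1) → ℕ) → Set (Finset ((i : Fin (e+1)) → Fin (pdims i))))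
    (k m n : ℕ) (hk : 0 < k) (hm : 0 < m) (hn : 0 < n) :
    exBox n m e F ≤ k * (lxBox n m e k F + n ^ e) := by
  classical
  apply csSup_le'
  rintro c ⟨M, hAvoid, rfl⟩
  -- per-tail chunks
  choose C hC1 hC2 hC3 using
    fun t : (i : Fin e) → Fin (BoxDims e m n i.succ) =>
      chunk k hk (M.filter (fun p => Fin.tail p = t))
  set T := M.image Fin.tail with hT
  set L := T.biUnion C with hLdef
  have htail : ∀ t, ∀ S ∈ C t, ∀ p ∈ S, Fin.tail p = t := by
    intro t S hS p hp
    exact (Finset.mem_filter.mp ((hC1 t S hS).2 hp)).2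
  have hsubM : ∀ t, ∀ S ∈ C t, S ⊆ M := by
    intro t S hS p hp
    exact (Finset.mem_filter.mp ((hC1 t S hS).2 hp)).1
  have hne : ∀ t, ∀ S ∈ C t, S.Nonempty := by
    intro t S hS
    exact Finset.card_pos.mp ((hC1 t S hS).1 ▸ hk)
  have hCdisj : ∀ t₁ ∈ T, ∀ t₂ ∈ T, t₁ ≠ t₂ → Disjoint (C t₁) (C t₂) := by
    intro t₁ _ t₂ _ hne12
    rw [Finset.disjoint_left]
    intro S hS1 hS2
    obtain ⟨p, hp⟩ := hne t₁ S hS1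
    exact hne12 ((htail t₁ S hS1 p hp).symm.trans (htail t₂ S hS2 p hp))
  have hLcard : L.card = ∑ t ∈ T, (C t).card := Finset.card_biUnion hCdisj
  have hMcard : M.card = ∑ t ∈ T, (M.filter (fun p => Fin.tail p = t)).card :=
    Finset.card_eq_sum_card_fiberwise (fun p hp => Finset.mem_image_of_mem _ hp)
  have hMle : M.card ≤ k * L.card + (k - 1) * T.card := by
    rw [hMcard, hLcard, Finset.mul_sum]
    calc ∑ t ∈ T, (M.filter (fun p => Fin.tail p = t)).card
        ≤ ∑ t ∈ T, (k * (C t).card + (k - 1)) :=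
          Finset.sum_le_sum (fun t _ => hC3 t)
      _ = ∑ t ∈ T, k * (C t).card + (k - 1) * T.card := by
          rw [Finset.sum_add_distrib, Finset.sum_const, smul_eq_mul, Nat.mul_comm]
  have hTle : T.card ≤ n ^ e := by
    calc T.card ≤ Fintype.card ((i : Fin e) → Fin (BoxDims e m n i.succ)) :=
          Finset.card_le_univ T
      _ = n ^ e := by
          rw [Fintype.card_pi]
          simp [BoxDims]
  -- L is a valid letter family
  have hLetter : IsLetterFamily k L := by
    refine ⟨?_, ?_, ?_⟩
    · intro S hS
      obtain ⟨t, _, hSt⟩ := Finset.mem_biUnion.mp hS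
      exact hne t S hSt
    · intro S hS S' hS' hSS'
      obtain ⟨t, _, hSt⟩ := Finset.mem_biUnion.mp hS
      obtain ⟨t', _, hSt'⟩ := Finset.mem_biUnion.mp hS'
      by_cases htt : t = t'
      · exact hC2 t S hSt S' (htt ▸ hSt') hSS'
      · rw [Finset.disjoint_left]
        intro p hpS hpS'
        exact htt (((htail t S hSt p hpS).symm).trans (htail t' S' hSt' p hpS'))
    · intro S hS
      obtain ⟨t, _, hSt⟩ := Finset.mem_biUnion.mp hS
      exact ⟨le_of_eq (hC1 t S hSt).1.symm, t, htail t S hSt⟩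
  have hLavoid : AvoidsFam (L.biUnion id) F := by
    refine avoidsFam_mono ?_ F hAvoid
    intro p hp
    obtain ⟨S, hSL, hpS⟩ := Finset.mem_biUnion.mp hp
    obtain ⟨t, _, hSt⟩ := Finset.mem_biUnion.mp hSL
    exact hsubM t S hSt hpS
  have hLle : L.card ≤ lxBox n m e k F := by
    apply le_csSup
    · refine ⟨Fintype.card (Finset ((i : Fin (e+1)) → Fin (BoxDims e m n i))), ?_⟩
      rintro c ⟨L', _, _, rfl⟩
      exact Finset.card_le_univ L'
    · exact ⟨L, hLetter, hLavoid, rfl⟩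
  calc M.card ≤ k * L.card + (k - 1) * T.card := hMle
    _ ≤ k * lxBox n m e k F + k * n ^ e := by
        have h1 : k * L.card ≤ k * lxBox n m e k F := Nat.mul_le_mul_left k hLle
        have h2 : (k - 1) * T.card ≤ k * n ^ e :=
          Nat.mul_le_mul (Nat.sub_le k 1) hTle
        omega
    _ = k * (lxBox n m e k F + n ^ e) := by ring

/-- `ex(n, m, F, d) ≤ k (lx_k(n, m, F, d) + n^{d-1})`, where `d = e + 1`. -/
theorem stmt3 (e : ℕ)
    (F : (pdims : Fin (e+1) → ℕ) → Set (Finset ((i : Fin (e+1)) → Fin (pdims i))))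
    (k m n : ℕ) (hk : 0 < k) (hm : 0 < m) (hn : 0 < n) :
    exBox n m e F ≤ k * (lxBox n m e k F + n ^ e) :=
  stmt3' e F k m n hk hm hn
end

section
/- Let P be a d-dimensional 0-1 matrix with at least one one. For every positive integer n: ex(n,F_{P,3},d+1) ≤ 3·(ex(n,P,d)·n + n^d), where ex(n,F_{P,3},d+1) is the maximum number of ones in a (d+1)-dimensional 0-1 matrix with all dimension lengths equal to n that contains no (P,3)-formation. -/
lemma headTailEq {d n : ℕ} {p q : Fin (d+1) → Fin n}
    (h0 : p 0 = q 0) (ht : Fin.tail p = Fin.tail q) : p = q := by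
  rw [← Fin.cons_self_tail p, ← Fin.cons_self_tail q, h0, ht]

lemma formation_of_mid {d n : ℕ} {pdims : Fin d → ℕ}
    {P : Finset ((i : Fin d) → Fin (pdims i))}
    {M : Finset (Fin (d+1) → Fin n)} {t : Fin n}
    (f : (i : Fin d) → Fin (pdims i) → Fin n)
    (hf : ∀ i, StrictMono (f i))
    (hmem : ∀ x ∈ P, Fin.cons t (fun i => f i (x i)) ∈ M)
    (hprev : ∀ x ∈ P, ∃ q ∈ M, Fin.tail q = (fun i => f i (x i)) ∧ q 0 < t)
    (hnext : ∀ x ∈ P, ∃ q ∈ M, Fin.tail q = (fun i => f i (x i)) ∧ t < q 0) :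
    ContainsFormation P 3 M := by
  classical
  set v : ((i : Fin d) → Fin (pdims i)) → (Fin d → Fin n) := fun x i => f i (x i) with hv
  have hvinj : Set.InjOn v P := by
    intro x _ y _ hxy
    funext i
    exact (hf i).injective (congrFun hxy i)
  set prev : (Fin d → Fin n) → (Fin (d+1) → Fin n) := fun w =>
    if h : ∃ q ∈ M, Fin.tail q = w ∧ q 0 < t then h.choose else Fin.cons t w with hprevdef
  set nxt : (Fin d → Fin n) → (Fin (d+1) → Fin n) := fun w =>
    if h : ∃ q ∈ M, Fin.tail q = w ∧ t < q 0 then h.choose else Fin.cons t w with hnxtdef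
  have prevSpec : ∀ x ∈ P, prev (v x) ∈ M ∧ Fin.tail (prev (v x)) = v x ∧ (prev (v x)) 0 < t := by
    intro x hx
    have h : ∃ q ∈ M, Fin.tail q = v x ∧ q 0 < t := hprev x hx
    have he : prev (v x) = h.choose := by rw [hprevdef]; exact dif_pos h
    rw [he]
    exact h.choose_spec
  have nxtSpec : ∀ x ∈ P, nxt (v x) ∈ M ∧ Fin.tail (nxt (v x)) = v x ∧ t < (nxt (v x)) 0 := by
    intro x hx
    have h : ∃ q ∈ M, Fin.tail q = v x ∧ t < q 0 := hnext x hx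
    have he : nxt (v x) = h.choose := by rw [hnxtdef]; exact dif_pos h
    rw [he]
    exact h.choose_spec
  refine ⟨![P.image (fun x => prev (v x)), P.image (fun x => Fin.cons t (v x)),
      P.image (fun x => nxt (v x))], ⟨?_, ⟨f, hf, ?_⟩, ?_⟩, ?_⟩
  · -- cards
    intro a
    fin_cases a
    · simpa using Finset.card_image_of_injOn (fun x hx y hy hxy => hvinj hx hy
        (by rw [← (prevSpec x hx).2.1, ← (prevSpec y hy).2.1, hxy]))
    · simpa using Finset.card_image_of_injOn (fun x hx y hy hxy => hvinj hx hy
        (by rw [← Fin.tail_cons (α := fun _ => Fin n) t (v x), hxy, Fin.tail_cons]))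
    · simpa using Finset.card_image_of_injOn (fun x hx y hy hxy => hvinj hx hy
        (by rw [← (nxtSpec x hx).2.1, ← (nxtSpec y hy).2.1, hxy]))
  · -- tails
    intro a
    fin_cases a
    · show (Finset.image _ _).image _ = _
      rw [Finset.image_image]
      exact Finset.image_congr (fun x hx => (prevSpec x hx).2.1)
    · show (Finset.image _ _).image _ = _
      rw [Finset.image_image]
      exact Finset.image_congr (fun x hx => Fin.tail_cons _ _)
    · show (Finset.image _ _).image _ = _
      rw [Finset.image_image]
      exact Finset.image_congr (fun x hx => (nxtSpec x hx).2.1)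
  · -- order
    intro a b hab p hp q hq
    have hp0 : p ∈ Finset.image (fun x => prev (v x)) P → p 0 < t := by
      intro h
      obtain ⟨x, hx, rfl⟩ := Finset.mem_image.mp h
      exact (prevSpec x hx).2.2
    have hp1 : ∀ r : Fin (d+1) → Fin n,
        r ∈ Finset.image (fun x => Fin.cons t (v x)) P → r 0 = t := by
      intro r h
      obtain ⟨x, _, rfl⟩ := Finset.mem_image.mp h
      rfl
    have hp2 : ∀ r : Fin (d+1) → Fin n,
        r ∈ Finset.image (fun x => nxt (v x)) P → t < r 0 := by
      intro r h
      obtain ⟨x, hx, rfl⟩ := Finset.mem_image.mp h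
      exact (nxtSpec x hx).2.2
    fin_cases a <;> fin_cases b
    · exact absurd hab (by decide)
    · exact (hp1 q hq) ▸ hp0 hp
    · exact lt_trans (hp0 hp) (hp2 q hq)
    · exact absurd hab (by decide)
    · exact absurd hab (by decide)
    · exact (hp1 p hp) ▸ hp2 q hq
    · exact absurd hab (by decide)
    · exact absurd hab (by decide)
    · exact absurd hab (by decide)
  · intro a
    fin_cases a
    · intro p hp
      obtain ⟨x, hx, rfl⟩ := Finset.mem_image.mp hp
      exact (prevSpec x hx).1
    · intro p hp
      obtain ⟨x, hx, rfl⟩ := Finset.mem_image.mp hp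
      exact hmem x hx
    · intro p hp
      obtain ⟨x, hx, rfl⟩ := Finset.mem_image.mp hp
      exact (nxtSpec x hx).1

/-- `ex(n, F_{P,3}, d+1) ≤ 3 (ex(n, P, d) · n + n^d)`. -/
theorem stmt5 {d : ℕ} (hd : 0 < d) {pdims : Fin d → ℕ}
    (P : Finset ((i : Fin d) → Fin (pdims i))) (hP : P.Nonempty)
    (n : ℕ) (hn : 0 < n) :
    exFormation n P 3 ≤ 3 * (exSq n P * n + n ^ d) := by
  classical
  refine csSup_le' ?_
  rintro k ⟨M, hM, rfl⟩
  set Mmin := M.filter (fun p => ¬ ∃ q ∈ M, Fin.tail q = Fin.tail p ∧ q 0 < p 0) with hMmin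
  set Mmax := M.filter (fun p => ¬ ∃ q ∈ M, Fin.tail q = Fin.tail p ∧ p 0 < q 0) with hMmax
  set Mmid := M.filter (fun p => (∃ q ∈ M, Fin.tail q = Fin.tail p ∧ q 0 < p 0) ∧
      (∃ q ∈ M, Fin.tail q = Fin.tail p ∧ p 0 < q 0)) with hMmid
  have hsub : M ⊆ Mmin ∪ Mmax ∪ Mmid := by
    intro p hp
    simp only [hMmin, hMmax, hMmid, Finset.mem_union, Finset.mem_filter]
    by_cases h1 : ∃ q ∈ M, Fin.tail q = Fin.tail p ∧ q 0 < p 0 <;>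
      by_cases h2 : ∃ q ∈ M, Fin.tail q = Fin.tail p ∧ p 0 < q 0 <;> tauto
  have hminmax : ∀ N : Finset (Fin (d+1) → Fin n), Set.InjOn (Fin.tail : (Fin (d+1) → Fin n) → (Fin d → Fin n)) N → N.card ≤ n ^ d := by
    intro N hN
    calc N.card = (N.image Fin.tail).card := (Finset.card_image_of_injOn hN).symm
      _ ≤ Fintype.card (Fin d → Fin n) := Finset.card_le_univ _
      _ = n ^ d := by simp
  have hmin : Mmin.card ≤ n ^ d := by
    apply hminmax
    intro p hp q hq htl
    simp only [hMmin, Finset.mem_coe, Finset.mem_filter] at hp hq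
    rcases lt_trichotomy (p 0) (q 0) with h | h | h
    · exact absurd ⟨p, hp.1, htl, h⟩ hq.2
    · exact headTailEq h htl
    · exact absurd ⟨q, hq.1, htl.symm, h⟩ hp.2
  have hmax : Mmax.card ≤ n ^ d := by
    apply hminmax
    intro p hp q hq htl
    simp only [hMmax, Finset.mem_coe, Finset.mem_filter] at hp hq
    rcases lt_trichotomy (p 0) (q 0) with h | h | h
    · exact absurd ⟨q, hq.1, htl.symm, h⟩ hp.2
    · exact headTailEq h htl
    · exact absurd ⟨p, hp.1, htl, h⟩ hq.2
  have hmid : Mmid.card ≤ n * exSq n P := by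
    have hfib : Mmid.card = ∑ t : Fin n, (Mmid.filter (fun p => p 0 = t)).card :=
      Finset.card_eq_sum_card_fiberwise (fun p _ => Finset.mem_univ (p 0))
    rw [hfib]
    have hone : ∀ t : Fin n, (Mmid.filter (fun p => p 0 = t)).card ≤ exSq n P := by
      intro t
      set Ft := Mmid.filter (fun p => p 0 = t) with hFt
      have hinj : Set.InjOn (Fin.tail : (Fin (d+1) → Fin n) → (Fin d → Fin n)) Ft := by
        intro p hp q hq htl
        simp only [hFt, Finset.mem_coe, Finset.mem_filter] at hp hq
        exact headTailEq (hp.2.trans hq.2.symm) htl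
      have hcard : Ft.card = (Ft.image Fin.tail).card := (Finset.card_image_of_injOn hinj).symm
      have hmemFt : ∀ w ∈ Ft.image Fin.tail, Fin.cons t w ∈ M ∧
          (∃ q ∈ M, Fin.tail q = w ∧ q 0 < t) ∧ (∃ q ∈ M, Fin.tail q = w ∧ t < q 0) := by
        intro w hw
        obtain ⟨p, hp, rfl⟩ := Finset.mem_image.mp hw
        simp only [hFt, hMmid, Finset.mem_filter] at hp
        obtain ⟨⟨hpM, hprev, hnext⟩, hpt⟩ := hp
        have hpe : Fin.cons t (Fin.tail p) = p := by
          rw [← hpt]; exact Fin.cons_self_tail p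
        refine ⟨hpe ▸ hpM, ?_, ?_⟩
        · obtain ⟨q, hq, hq2, hq3⟩ := hprev
          exact ⟨q, hq, hq2, hpt ▸ hq3⟩
        · obtain ⟨q, hq, hq2, hq3⟩ := hnext
          exact ⟨q, hq, hq2, hpt ▸ hq3⟩
      have havoid : ¬ MContains (Ft.image Fin.tail) P := by
        rintro ⟨f, hf, hfP⟩
        apply hM
        refine formation_of_mid (t := t) f hf ?_ ?_ ?_
        · exact fun x hx => (hmemFt _ (hfP x hx)).1
        · exact fun x hx => (hmemFt _ (hfP x hx)).2.1
        · exact fun x hx => (hmemFt _ (hfP x hx)).2.2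
      have hbdd : BddAbove {k | ∃ M' : Finset (Fin d → Fin n), ¬ MContains M' P ∧ M'.card = k} := by
        refine ⟨n ^ d, ?_⟩
        rintro k ⟨M', _, rfl⟩
        calc M'.card ≤ Fintype.card (Fin d → Fin n) := Finset.card_le_univ _
          _ = n ^ d := by simp
      calc Ft.card = (Ft.image Fin.tail).card := hcard
        _ ≤ exSq n P := le_csSup hbdd ⟨Ft.image Fin.tail, havoid, rfl⟩
    calc ∑ t : Fin n, (Mmid.filter (fun p => p 0 = t)).card
        ≤ ∑ _t : Fin n, exSq n P := Finset.sum_le_sum (fun t _ => hone t)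
      _ = n * exSq n P := by simp [Finset.sum_const, mul_comm]
  have hM1 : M.card ≤ Mmin.card + Mmax.card + Mmid.card :=
    le_trans (Finset.card_le_card hsub)
      (le_trans (Finset.card_union_le _ _)
        (Nat.add_le_add_right (Finset.card_union_le _ _) _))
  have hc : exSq n P * n = n * exSq n P := Nat.mul_comm _ _
  linarith
end

section
/- Let P be a d-dimensional 0-1 matrix with at least one one. For every integer s > 1 and all positive integers k, m, n: lx_{2k−1}(n,2m,F_{P,s},d+1) ≤ 2·lx_{2k−1}(n,m,F_{P,s},d+1) + 2·lx_k(n,2m,F_{P,s},d+1). -/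
section Aux

/-- Embed cells of the `(m1,n,…,n)` box into the `(m2,n,…,n)` box by applying `e0`
to the first coordinate. -/
def embE {d m1 m2 n : ℕ} (e0 : Fin m1 → Fin m2)
    (p : (i : Fin (d+1)) → Fin (BoxDims d m1 n i)) :
    (i : Fin (d+1)) → Fin (BoxDims d m2 n i) :=
  Fin.cons (e0 (p 0)) (Fin.tail p)

lemma embE_inj {d m1 m2 n : ℕ} {e0 : Fin m1 → Fin m2} (he : Function.Injective e0) :
    Function.Injective (embE (d := d) (n := n) e0) := by
  intro p q h
  funext i
  refine Fin.cases ?_ ?_ i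
  · exact he (congrFun h 0)
  · intro j; exact congrFun h j.succ

lemma contains_mono {d : ℕ} {pdims : Fin d → ℕ} {P : Finset ((i : Fin d) → Fin (pdims i))}
    {s : ℕ} {mdims : Fin (d+1) → ℕ} {M N : Finset ((i : Fin (d+1)) → Fin (mdims i))}
    (hMN : M ⊆ N) (h : ContainsFormation P s M) : ContainsFormation P s N := by
  obtain ⟨G, hG, hsub⟩ := h
  exact ⟨G, hG, fun a => (hsub a).trans hMN⟩

lemma contains_map {d : ℕ} {pdims : Fin d → ℕ} {P : Finset ((i : Fin d) → Fin (pdims i))}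
    {s : ℕ} {m1 m2 n : ℕ} {e0 : Fin m1 → Fin m2} (he : StrictMono e0)
    {M : Finset ((i : Fin (d+1)) → Fin (BoxDims d m1 n i))}
    (h : ContainsFormation P s M) :
    ContainsFormation P s (M.image (embE (n := n) e0)) := by
  classical
  obtain ⟨G, ⟨hcard, ⟨g, hg, htail⟩, hord⟩, hsub⟩ := h
  refine ⟨fun a => (G a).image (embE (n := n) e0), ⟨?_, ⟨g, hg, ?_⟩, ?_⟩, ?_⟩
  · intro a; rw [Finset.card_image_of_injective _ (embE_inj he.injective)]; exact hcard a
  · intro a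
    rw [Finset.image_image]
    have h1 : (Fin.tail ∘ embE (d := d) (n := n) e0) = Fin.tail := rfl
    rw [h1]
    exact htail a
  · intro a b hab p hp q hq
    simp only [Finset.mem_image] at hp hq
    obtain ⟨p', hp', rfl⟩ := hp
    obtain ⟨q', hq', rfl⟩ := hq
    exact he (hord a b hab p' hp' q' hq')
  · intro a; exact Finset.image_subset_image (hsub a)

lemma le_lx {d : ℕ} {pdims : Fin d → ℕ} (P : Finset ((i : Fin d) → Fin (pdims i)))
    (s k n m : ℕ) (L : Finset (Finset ((i : Fin (d+1)) → Fin (BoxDims d m n i))))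
    (h1 : IsLetterFamily k L) (h2 : ¬ ContainsFormation P s (L.biUnion id)) :
    L.card ≤ lxFormation n m P s k := by
  classical
  apply le_csSup
  · refine ⟨Fintype.card (Finset ((i : Fin (d+1)) → Fin (BoxDims d m n i))), ?_⟩
    rintro c ⟨L', _, _, rfl⟩
    exact Finset.card_le_univ L'
  · exact ⟨L, h1, h2, rfl⟩

end Aux

/-- `lx_{2k-1}(n, 2m, F_{P,s}, d+1)
    ≤ 2 lx_{2k-1}(n, m, F_{P,s}, d+1) + 2 lx_k(n, 2m, F_{P,s}, d+1)`. -/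
theorem stmt6 {d : ℕ} (hd : 0 < d) {pdims : Fin d → ℕ}
    (P : Finset ((i : Fin d) → Fin (pdims i))) (hP : P.Nonempty)
    (s k m n : ℕ) (hs : 1 < s) (hk : 0 < k) (hm : 0 < m) (hn : 0 < n) :
    lxFormation n (2 * m) P s (2 * k - 1)
      ≤ 2 * lxFormation n m P s (2 * k - 1) + 2 * lxFormation n (2 * m) P s k := by
  classical
  apply csSup_le'
  rintro c ⟨L, ⟨hne, hdisj, hrow⟩, hav, rfl⟩
  set L1 := L.filter (fun S => ∀ p ∈ S, (p 0).val < m) with hL1def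
  set Lr := L.filter (fun S => ¬ ∀ p ∈ S, (p 0).val < m) with hLrdef
  set L2 := Lr.filter (fun S => ∀ p ∈ S, ¬ (p 0).val < m) with hL2def
  set Lc := Lr.filter (fun S => ¬ ∀ p ∈ S, ¬ (p 0).val < m) with hLcdef
  set Lc1 := Lc.filter (fun S => k ≤ (S.filter (fun p => (p 0).val < m)).card) with hLc1def
  set Lc2 := Lc.filter (fun S => ¬ k ≤ (S.filter (fun p => (p 0).val < m)).card) with hLc2def
  have hsplit : L1.card + (L2.card + (Lc1.card + Lc2.card)) = L.card := by
    rw [hLc1def, hLc2def, Finset.card_filter_add_card_filter_not,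
      hL2def, hLcdef, Finset.card_filter_add_card_filter_not,
      hL1def, hLrdef, Finset.card_filter_add_card_filter_not]
  -- generic treatment of the two "half" families
  have half : ∀ (e0 : Fin m → Fin (2*m)), StrictMono e0 →
      ∀ L' ⊆ L, (∀ S ∈ L', ∀ p ∈ S, ∃ q : Fin m, e0 q = p 0) →
      L'.card ≤ lxFormation n m P s (2 * k - 1) := by
    intro e0 hmono L' hL'L hrange
    have hEinj : Function.Injective (embE (d := d) (n := n) e0) := embE_inj hmono.injective
    set pre : Finset ((i : Fin (d+1)) → Fin (BoxDims d (2*m) n i)) →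
        Finset ((i : Fin (d+1)) → Fin (BoxDims d m n i)) :=
      fun S => S.preimage (embE (n := n) e0) hEinj.injOn with hpredef
    have himg : ∀ S ∈ L', (pre S).image (embE (n := n) e0) = S := by
      intro S hS
      ext p
      simp only [Finset.mem_image, hpredef, Finset.mem_preimage]
      constructor
      · rintro ⟨q, hq, rfl⟩; exact hq
      · intro hp
        obtain ⟨q0, hq0⟩ := hrange S hS p hp
        have heq : embE (d := d) (n := n) e0 (Fin.cons q0 (Fin.tail p)) = p := by
          funext i
          refine Fin.cases ?_ ?_ i
          · exact hq0
          · intro j; rfl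
        refine ⟨Fin.cons q0 (Fin.tail p), ?_, heq⟩
        rw [heq]; exact hp
    have hcardpre : ∀ S ∈ L', (pre S).card = S.card := by
      intro S hS
      have h1 := Finset.card_image_of_injective (pre S) hEinj
      rw [himg S hS] at h1
      exact h1.symm
    have hinjOn : Set.InjOn pre L' := by
      intro S hS T hT h
      rw [← himg S hS, ← himg T hT, h]
    set L'' := L'.image pre with hL''def
    have hcard'' : L''.card = L'.card := Finset.card_image_of_injOn hinjOn
    rw [← hcard'']
    apply le_lx
    · refine ⟨?_, ?_, ?_⟩
      · rintro S' hS'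
        simp only [hL''def, Finset.mem_image] at hS'
        obtain ⟨S, hS, rfl⟩ := hS'
        rw [← Finset.image_nonempty (f := embE (n := n) e0), himg S hS]
        exact hne S (hL'L hS)
      · rintro S' hS' T' hT' hST
        simp only [hL''def, Finset.mem_image] at hS' hT'
        obtain ⟨S, hS, rfl⟩ := hS'
        obtain ⟨T, hT, rfl⟩ := hT'
        have hSTne : S ≠ T := fun h => hST (by rw [h])
        have hdST := hdisj S (hL'L hS) T (hL'L hT) hSTne
        rw [Finset.disjoint_left]
        intro q hqS hqT
        rw [hpredef, Finset.mem_preimage] at hqS hqT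
        exact Finset.disjoint_left.mp hdST hqS hqT
      · rintro S' hS'
        simp only [hL''def, Finset.mem_image] at hS'
        obtain ⟨S, hS, rfl⟩ := hS'
        constructor
        · rw [hcardpre S hS]
          exact (hrow S (hL'L hS)).1
        · obtain ⟨t, ht⟩ := (hrow S (hL'L hS)).2
          refine ⟨t, ?_⟩
          intro q hq
          rw [hpredef, Finset.mem_preimage] at hq
          exact ht _ hq
    · intro hcf
      apply hav
      have h2 := contains_map hmono hcf
      refine contains_mono ?_ h2
      intro p hp
      simp only [Finset.mem_image, Finset.mem_biUnion, id] at hp ⊢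
      obtain ⟨q, ⟨S', hS', hq⟩, rfl⟩ := hp
      simp only [hL''def, Finset.mem_image] at hS'
      obtain ⟨S, hS, rfl⟩ := hS'
      rw [hpredef, Finset.mem_preimage] at hq
      exact ⟨S, hL'L hS, hq⟩
  -- bound for L1
  have hb1 : L1.card ≤ lxFormation n m P s (2 * k - 1) := by
    have hle : m ≤ 2*m := by omega
    refine half (Fin.castLE hle) (fun a b h => h) L1 (Finset.filter_subset _ _) ?_
    intro S hS p hp
    rw [hL1def, Finset.mem_filter] at hS
    have hplo := hS.2 p hp
    exact ⟨⟨(p 0).val, hplo⟩, Fin.ext rfl⟩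
  -- bound for L2
  have hb2 : L2.card ≤ lxFormation n m P s (2 * k - 1) := by
    have hmono : StrictMono (fun x : Fin m => (⟨x.val + m, by omega⟩ : Fin (2*m))) := by
      intro a b h
      simp only [Fin.lt_def]
      exact Nat.add_lt_add_right h m
    refine half _ hmono L2 ((Finset.filter_subset _ _).trans (Finset.filter_subset _ _)) ?_
    intro S hS p hp
    rw [hL2def, Finset.mem_filter] at hS
    have hphi : ¬ (p 0).val < m := hS.2 p hp
    have hlt : (p 0).val < 2*m := (p 0).isLt
    refine ⟨⟨(p 0).val - m, by omega⟩, ?_⟩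
    exact Fin.ext (by simp; omega)
  -- generic treatment of the crossing families
  have cross : ∀ (F : Finset ((i : Fin (d+1)) → Fin (BoxDims d (2*m) n i)) →
        Finset ((i : Fin (d+1)) → Fin (BoxDims d (2*m) n i))),
      ∀ L' ⊆ L, (∀ S ∈ L', F S ⊆ S) → (∀ S ∈ L', k ≤ (F S).card) →
      L'.card ≤ lxFormation n (2*m) P s k := by
    intro F L' hL'L hFsub hk'
    have hne' : ∀ S ∈ L', (F S).Nonempty := by
      intro S hS
      rw [← Finset.card_pos]
      exact lt_of_lt_of_le hk (hk' S hS)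
    have hdisj' : ∀ S ∈ L', ∀ T ∈ L', S ≠ T → Disjoint (F S) (F T) := by
      intro S hS T hT hST
      exact (hdisj S (hL'L hS) T (hL'L hT) hST).mono (hFsub S hS) (hFsub T hT)
    have hinjOn : Set.InjOn F L' := by
      intro S hS T hT h
      by_contra hST
      have hd2 := hdisj' S hS T hT hST
      rw [h, disjoint_self] at hd2
      exact (hne' T hT).ne_empty (by simpa using hd2)
    set M' := L'.image F with hM'def
    have hcard' : M'.card = L'.card := Finset.card_image_of_injOn hinjOn
    rw [← hcard']
    apply le_lx
    · refine ⟨?_, ?_, ?_⟩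
      · rintro S' hS'
        simp only [hM'def, Finset.mem_image] at hS'
        obtain ⟨S, hS, rfl⟩ := hS'
        exact hne' S hS
      · rintro S' hS' T' hT' hST
        simp only [hM'def, Finset.mem_image] at hS' hT'
        obtain ⟨S, hS, rfl⟩ := hS'
        obtain ⟨T, hT, rfl⟩ := hT'
        have hSTne : S ≠ T := fun h => hST (by rw [h])
        exact hdisj' S hS T hT hSTne
      · rintro S' hS'
        simp only [hM'def, Finset.mem_image] at hS'
        obtain ⟨S, hS, rfl⟩ := hS'
        refine ⟨hk' S hS, ?_⟩
        obtain ⟨t, ht⟩ := (hrow S (hL'L hS)).2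
        exact ⟨t, fun p hp => ht p (hFsub S hS hp)⟩
    · intro hcf
      apply hav
      refine contains_mono ?_ hcf
      intro p hp
      simp only [Finset.mem_biUnion, id] at hp ⊢
      obtain ⟨S', hS', hp⟩ := hp
      simp only [hM'def, Finset.mem_image] at hS'
      obtain ⟨S, hS, rfl⟩ := hS'
      exact ⟨S, hL'L hS, hFsub S hS hp⟩
  have hb3 : Lc1.card ≤ lxFormation n (2*m) P s k := by
    refine cross (fun S => S.filter (fun p => (p 0).val < m)) Lc1 ?_ ?_ ?_
    · intro S hS
      simp only [hLc1def, hLcdef, hLrdef, Finset.mem_filter] at hS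
      exact hS.1.1.1
    · intro S _
      exact Finset.filter_subset _ _
    · intro S hS
      rw [hLc1def, Finset.mem_filter] at hS
      exact hS.2
  have hb4 : Lc2.card ≤ lxFormation n (2*m) P s k := by
    refine cross (fun S => S.filter (fun p => ¬ (p 0).val < m)) Lc2 ?_ ?_ ?_
    · intro S hS
      simp only [hLc2def, hLcdef, hLrdef, Finset.mem_filter] at hS
      exact hS.1.1.1
    · intro S _
      exact Finset.filter_subset _ _
    · intro S hS
      simp only [hLc2def, hLcdef, hLrdef, Finset.mem_filter] at hS
      have hSL : S ∈ L := hS.1.1.1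
      have hScard : 2 * k - 1 ≤ S.card := (hrow S hSL).1
      have hklt : ¬ k ≤ (S.filter (fun p => (p 0).val < m)).card := hS.2
      have hsum := Finset.card_filter_add_card_filter_not
        (s := S) (p := fun r => (r 0).val < m)
      clear hS
      revert hsum hklt hScard
      generalize (S.filter (fun p => (p 0).val < m)).card = a
      generalize (S.filter (fun p => ¬ (p 0).val < m)).card = b
      generalize S.card = cc
      intro h1 h2 h3
      omega
  omega
end

section
/- For every integer s ≥ 3 there is a constant C depending only on s such that for every positive integer d, every d-dimensional 0-1 matrix P with at least one one, and all integers m ≥ 2 and n ≥ 1, with k = 2^{s−2}+1: lx_k(n,m,F_{P,s},d+1) ≤ C · ex(n,P,d) · m · (1+log₂ m)^{s−3}. -/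
namespace Stmt7Aux

variable {d n : ℕ}

/-- cells of the box -/
abbrev Cell (d m n : ℕ) := (i : Fin (d+1)) → Fin (BoxDims d m n i)

def cfst {m : ℕ} (p : Cell d m n) : Fin m := p 0
def ctl {m : ℕ} (p : Cell d m n) : Fin d → Fin n := Fin.tail p
def cmk {m : ℕ} (x : Fin m) (t : Fin d → Fin n) : Cell d m n := Fin.cons x t

lemma cmk_fst_tl {m : ℕ} (p : Cell d m n) : cmk (cfst p) (ctl p) = p :=
  Fin.cons_self_tail p

lemma cfst_cmk {m : ℕ} (x : Fin m) (t : Fin d → Fin n) : cfst (cmk x t : Cell d m n) = x := rfl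

lemma ctl_cmk {m : ℕ} (x : Fin m) (t : Fin d → Fin n) : ctl (cmk x t : Cell d m n) = t :=
  funext fun i => rfl

lemma cell_eq {m : ℕ} {p q : Cell d m n} (h1 : cfst p = cfst q) (h2 : ctl p = ctl q) :
    p = q := by
  rw [← cmk_fst_tl p, ← cmk_fst_tl q, h1, h2]

lemma tail_eq_ctl {m : ℕ} (p : Cell d m n) : Fin.tail p = ctl p := rfl

section SSup

variable {pdims : Fin d → ℕ} (P : Finset ((i : Fin d) → Fin (pdims i)))

lemma le_lx {m s k : ℕ} (L : Finset (Finset (Cell d m n)))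
    (h1 : IsLetterFamily k L) (h2 : ¬ ContainsFormation P s (L.biUnion id)) :
    L.card ≤ lxFormation n m P s k := by
  refine le_csSup ⟨Fintype.card (Finset (Cell d m n)), ?_⟩ ⟨L, h1, h2, rfl⟩
  rintro c ⟨L', -, -, rfl⟩
  simpa using Finset.card_le_univ L'

lemma lx_le {m s k b : ℕ}
    (h : ∀ L : Finset (Finset (Cell d m n)), IsLetterFamily k L →
      ¬ ContainsFormation P s (L.biUnion id) → L.card ≤ b) :
    lxFormation n m P s k ≤ b := by
  rcases Set.eq_empty_or_nonempty
    {c | ∃ L : Finset (Finset (Cell d m n)),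
      IsLetterFamily k L ∧ ¬ ContainsFormation P s (L.biUnion id) ∧ L.card = c} with he | hne
  · rw [lxFormation, he, csSup_empty]; exact Nat.zero_le _
  · refine csSup_le hne ?_
    rintro c ⟨L, hL1, hL2, rfl⟩
    exact h L hL1 hL2

lemma card_le_exSq (M : Finset (Fin d → Fin n)) (h : ¬ MContains M P) :
    M.card ≤ exSq n P := by
  refine le_csSup ⟨Fintype.card (Fin d → Fin n), ?_⟩ ⟨M, h, rfl⟩
  rintro c ⟨M', -, rfl⟩
  simpa using Finset.card_le_univ M'

/-- for `m ≤ 1` there are no letters with at least 2 cells -/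
lemma lx_small {m s k : ℕ} (hm : m ≤ 1) (hk : 2 ≤ k) : lxFormation n m P s k = 0 := by
  refine Nat.le_zero.mp (lx_le P ?_)
  intro L hL _
  have : L = ∅ := by
    by_contra hne
    obtain ⟨S, hS⟩ := Finset.nonempty_iff_ne_empty.mpr hne
    obtain ⟨hk2, t, ht⟩ := hL.2.2 S hS
    have h2 : 1 < S.card := lt_of_lt_of_le one_lt_two (le_trans hk hk2)
    obtain ⟨p, hp, q, hq, hpq⟩ := Finset.one_lt_card.mp h2
    refine hpq (cell_eq ?_ ?_)
    · have h1 : ((cfst p : Fin m) : ℕ) < m := (cfst p).isLt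
      have h2 : ((cfst q : Fin m) : ℕ) < m := (cfst q).isLt
      exact Fin.ext (by omega)
    · rw [← tail_eq_ctl, ← tail_eq_ctl, ht p hp, ht q hq]
  simp [this]

end SSup

end Stmt7Aux
namespace Stmt7Aux

section Transfer

variable {d n : ℕ} {pdims : Fin d → ℕ} {P : Finset ((i : Fin d) → Fin (pdims i))}
variable {m m' : ℕ}

def phi (proj : Fin m → Fin m') : Cell d m n → Cell d m' n :=
  fun p => cmk (proj (cfst p)) (ctl p)

def psi (lift : Fin m' → Fin m) : Cell d m' n → Cell d m n :=
  fun q => cmk (lift (cfst q)) (ctl q)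

def res (proj : Fin m → Fin m') (side : Fin m → Prop) [DecidablePred side]
    (S : Finset (Cell d m n)) : Finset (Cell d m' n) :=
  (S.filter (fun p => side (cfst p))).image (phi proj)

variable (lift : Fin m' → Fin m) (proj : Fin m → Fin m') (side : Fin m → Prop)
  [DecidablePred side]

lemma psi_phi (hlp : ∀ x, side x → lift (proj x) = x) {p : Cell d m n}
    (hp : side (cfst p)) : psi lift (phi proj p) = (p : Cell d m n) := by
  unfold psi phi
  rw [cfst_cmk, ctl_cmk, hlp _ hp, cmk_fst_tl]

lemma cfst_psi (q : Cell d m' n) : cfst (psi lift q) = lift (cfst q) := rfl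

lemma ctl_psi (q : Cell d m' n) : ctl (psi lift q) = ctl q := ctl_cmk _ _

lemma mem_res {S : Finset (Cell d m n)} {q : Cell d m' n} :
    q ∈ res proj side S ↔ ∃ p, p ∈ S ∧ side (cfst p) ∧ phi proj p = q := by
  simp [res, Finset.mem_image, Finset.mem_filter, and_assoc]

lemma card_res (hlp : ∀ x, side x → lift (proj x) = x) (S : Finset (Cell d m n)) :
    (res proj side S).card = (S.filter (fun p => side (cfst p))).card := by
  refine Finset.card_image_of_injOn ?_
  intro p hp p' hp' h
  have hps : side (cfst p) := (Finset.mem_filter.mp hp).2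
  have hps' : side (cfst p') := (Finset.mem_filter.mp hp').2
  rw [← psi_phi lift proj side hlp hps, ← psi_phi lift proj side hlp hps', h]

lemma res_injOn (hlp : ∀ x, side x → lift (proj x) = x) {k k' : ℕ}
    {L L1 : Finset (Finset (Cell d m n))}
    (hL : IsLetterFamily k L) (hsub : L1 ⊆ L) (hk' : 1 ≤ k')
    (hcard : ∀ S ∈ L1, k' ≤ (S.filter (fun p => side (cfst p))).card) :
    Set.InjOn (res (d := d) (n := n) proj side) ↑L1 := by
  intro S hS T hT h
  by_contra hne
  have hpos : 0 < (S.filter (fun p => side (cfst p))).card :=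
    lt_of_lt_of_le hk' (hcard S hS)
  obtain ⟨p, hp⟩ := Finset.card_pos.mp hpos
  have hpS : p ∈ S := (Finset.mem_filter.mp hp).1
  have hps : side (cfst p) := (Finset.mem_filter.mp hp).2
  have h1 : phi proj p ∈ res proj side T := by
    rw [← h, mem_res]; exact ⟨p, hpS, hps, rfl⟩
  obtain ⟨p', hp'T, hps', hpp'⟩ := (mem_res proj side).mp h1
  have : p' = p := by
    rw [← psi_phi lift proj side hlp hps', hpp', psi_phi lift proj side hlp hps]
  have hpT : p ∈ T := this ▸ hp'T
  exact (Finset.disjoint_left.mp (hL.2.1 S (hsub hS) T (hsub hT) hne) hpS) hpT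

lemma res_family (hlp : ∀ x, side x → lift (proj x) = x) {k k' : ℕ}
    {L L1 : Finset (Finset (Cell d m n))}
    (hL : IsLetterFamily k L) (hsub : L1 ⊆ L) (hk' : 1 ≤ k')
    (hcard : ∀ S ∈ L1, k' ≤ (S.filter (fun p => side (cfst p))).card) :
    IsLetterFamily k' (L1.image (res proj side)) ∧
      (L1.image (res proj side)).card = L1.card := by
  have hinj := res_injOn lift proj side hlp hL hsub hk' hcard
  constructor
  · refine ⟨?_, ?_, ?_⟩
    · intro S' hS'
      obtain ⟨S, hS, rfl⟩ := Finset.mem_image.mp hS'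
      refine Finset.card_pos.mp ?_
      rw [card_res lift proj side hlp]
      exact lt_of_lt_of_le hk' (hcard S hS)
    · intro S' hS' T' hT' hne
      obtain ⟨S, hS, rfl⟩ := Finset.mem_image.mp hS'
      obtain ⟨T, hT, rfl⟩ := Finset.mem_image.mp hT'
      have hSTne : S ≠ T := fun h => hne (by rw [h])
      rw [Finset.disjoint_left]
      intro q hqS hqT
      obtain ⟨p, hpS, hps, hpq⟩ := (mem_res proj side).mp hqS
      obtain ⟨p', hp'T, hps', hpq'⟩ := (mem_res proj side).mp hqT
      have : p = p' := by
        rw [← psi_phi lift proj side hlp hps, hpq,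
          ← psi_phi lift proj side hlp hps', hpq']
      exact (Finset.disjoint_left.mp (hL.2.1 S (hsub hS) T (hsub hT) hSTne) hpS)
        (this ▸ hp'T)
    · intro S' hS'
      obtain ⟨S, hS, rfl⟩ := Finset.mem_image.mp hS'
      constructor
      · rw [card_res lift proj side hlp]; exact hcard S hS
      · obtain ⟨-, t, ht⟩ := hL.2.2 S (hsub hS)
        refine ⟨t, ?_⟩
        intro q hq
        obtain ⟨p, hpS, -, rfl⟩ := (mem_res proj side).mp hq
        show ctl (phi proj p) = t
        rw [phi, ctl_cmk]
        exact ht p hpS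
  · exact Finset.card_image_of_injOn hinj

lemma res_formation (hlp : ∀ x, side x → lift (proj x) = x) (hmono : StrictMono lift)
    {s' : ℕ} {L1 : Finset (Finset (Cell d m n))}
    (hcf : ContainsFormation P s' ((L1.image (res proj side)).biUnion id)) :
    ∃ G : Fin s' → Finset (Cell d m n), FormationGroups P s' G ∧
      ∀ a, ∀ p ∈ G a, side (cfst p) ∧ ∃ S ∈ L1, p ∈ S := by
  obtain ⟨G', ⟨hcard, ⟨g, hg, htails⟩, hord⟩, hsub⟩ := hcf
  have hpsiinj : Function.Injective (psi (d := d) (n := n) lift) := by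
    intro q q' h
    refine cell_eq (hmono.injective ?_) ?_
    · rw [← cfst_psi lift q, ← cfst_psi lift q', h]
    · rw [← ctl_psi lift q, ← ctl_psi lift q', h]
  have key : ∀ a, ∀ q ∈ G' a, side (cfst (psi lift q)) ∧ ∃ S ∈ L1, psi lift q ∈ S := by
    intro a q hq
    have := hsub a hq
    simp only [Finset.mem_biUnion, id] at this
    obtain ⟨S', hS', hqS'⟩ := this
    obtain ⟨S, hS, rfl⟩ := Finset.mem_image.mp hS'
    obtain ⟨p, hpS, hps, rfl⟩ := (mem_res proj side).mp hqS'
    rw [psi_phi lift proj side hlp hps]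
    exact ⟨hps, S, hS, hpS⟩
  refine ⟨fun a => (G' a).image (psi lift), ⟨?_, ⟨g, hg, ?_⟩, ?_⟩, ?_⟩
  · intro a
    rw [Finset.card_image_of_injective _ hpsiinj]
    exact hcard a
  · intro a
    rw [Finset.image_image]
    have : (Fin.tail ∘ psi lift : Cell d m' n → _) = Fin.tail := by
      funext q
      exact ctl_psi lift q
    rw [this]
    exact htails a
  · intro a b hab p hp q hq
    obtain ⟨p', hp', rfl⟩ := Finset.mem_image.mp hp
    obtain ⟨q', hq', rfl⟩ := Finset.mem_image.mp hq
    exact hmono (hord a b hab p' hp' q' hq')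
  · intro a p hp
    obtain ⟨p', hp', rfl⟩ := Finset.mem_image.mp hp
    exact key a p' hp'

end Transfer

end Stmt7Aux
namespace Stmt7Aux

section Extend

variable {d n : ℕ} {pdims : Fin d → ℕ} {P : Finset ((i : Fin d) → Fin (pdims i))}
variable {m : ℕ} {side oside : Fin m → Prop}

lemma tfun_injOn {g : (i : Fin d) → (Fin (pdims i) → Fin (BoxDims d m n i.succ))}
    (hg : ∀ i, StrictMono (g i)) :
    Function.Injective (fun (y : (i : Fin d) → Fin (pdims i)) => fun i => g i (y i)) := by
  intro y y' h
  funext i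
  exact (hg i).injective (congrFun h i)

/-- append a new group after an `s'`-group formation whose cells all lie on `side`,
 using cells on `oside` of the letters involved -/
lemma extend_formation {s' : ℕ} (hs' : 0 < s') {k : ℕ}
    {L L1 : Finset (Finset (Cell d m n))}
    (hL : IsLetterFamily k L) (hsub : L1 ⊆ L)
    {G : Fin s' → Finset (Cell d m n)} (hG : FormationGroups P s' G)
    (hcell : ∀ a, ∀ p ∈ G a, side (cfst p) ∧ ∃ S ∈ L1, p ∈ S)
    (hother : ∀ S ∈ L1, ∃ r ∈ S, oside (cfst r))
    (horder : ∀ x y : Fin m, side x → oside y → x < y) :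
    ContainsFormation P (s'+1) (L.biUnion id) := by
  obtain ⟨hcard, ⟨g, hg, htails⟩, hord⟩ := hG
  set t : ((i : Fin d) → Fin (pdims i)) → ((i : Fin d) → Fin (BoxDims d m n i.succ)) :=
    fun y => fun i => g i (y i) with ht_def
  have a0 : Fin s' := ⟨0, hs'⟩
  have hch : ∀ y : {y // y ∈ P}, ∃ r : Cell d m n,
      (∃ S ∈ L, r ∈ S) ∧ oside (cfst r) ∧ Fin.tail r = t y.1 := by
    rintro ⟨y, hy⟩
    have h1 : t y ∈ (G a0).image Fin.tail := by
      rw [htails a0]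
      exact Finset.mem_image_of_mem _ hy
    obtain ⟨q, hq, hqt⟩ := Finset.mem_image.mp h1
    obtain ⟨-, S, hS, hqS⟩ := hcell a0 q hq
    obtain ⟨r, hrS, hro⟩ := hother S hS
    obtain ⟨-, t0, ht0⟩ := hL.2.2 S (hsub hS)
    exact ⟨r, ⟨S, hsub hS, hrS⟩, hro, by rw [ht0 r hrS, ← ht0 q hqS, hqt]⟩
  choose rf hr1 hr2 hr3 using hch
  set newG : Finset (Cell d m n) := P.attach.image rf with hnewG
  have hmem_new : ∀ r ∈ newG, ∃ y : {y // y ∈ P}, rf y = r := by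
    intro r hr
    obtain ⟨y, -, hy⟩ := Finset.mem_image.mp hr
    exact ⟨y, hy⟩
  refine ⟨Fin.lastCases newG G, ⟨?_, ⟨g, hg, ?_⟩, ?_⟩, ?_⟩
  · intro a
    induction a using Fin.lastCases with
    | last =>
      simp only [Fin.lastCases_last, hnewG]
      rw [Finset.card_image_of_injOn, Finset.card_attach]
      intro y _ y' _ h
      have : t y.1 = t y'.1 := by rw [← hr3 y, ← hr3 y', h]
      exact Subtype.ext (tfun_injOn hg this)
    | cast a =>
      simp only [Fin.lastCases_castSucc]
      exact hcard a
  · intro a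
    induction a using Fin.lastCases with
    | last =>
      simp only [Fin.lastCases_last]
      ext z
      simp only [Finset.mem_image, hnewG]
      constructor
      · rintro ⟨r, ⟨y, -, rfl⟩, rfl⟩
        exact ⟨y.1, y.2, (hr3 y).symm⟩
      · rintro ⟨y, hy, rfl⟩
        exact ⟨rf ⟨y, hy⟩, ⟨⟨y, hy⟩, Finset.mem_attach _ _, rfl⟩, hr3 ⟨y, hy⟩⟩
    | cast a =>
      simp only [Fin.lastCases_castSucc]
      exact htails a
  · intro a b hab p hp q hq
    induction b using Fin.lastCases with
    | last =>
      have hb : (a : ℕ) < s' := by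
        have := hab
        rw [Fin.lt_def] at this
        simpa [Fin.last] using this
      have ha : a = Fin.castSucc ⟨(a : ℕ), hb⟩ := Fin.ext rfl
      rw [ha] at hp
      simp only [Fin.lastCases_castSucc] at hp
      simp only [Fin.lastCases_last] at hq
      obtain ⟨y, rfl⟩ := hmem_new q hq
      exact horder _ _ (hcell _ p hp).1 (hr2 y)
    | cast b' =>
      have hb : (a : ℕ) < s' := by
        have h1 := hab
        rw [Fin.lt_def] at h1
        have h2 : (Fin.castSucc b' : ℕ) < s' := b'.isLt
        omega
      have ha : a = Fin.castSucc ⟨(a : ℕ), hb⟩ := Fin.ext rfl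
      rw [ha] at hp
      simp only [Fin.lastCases_castSucc] at hp
      simp only [Fin.lastCases_castSucc] at hq
      refine hord ⟨(a : ℕ), hb⟩ b' ?_ p hp q hq
      rw [Fin.lt_def]
      have := hab
      rw [Fin.lt_def] at this
      simpa using this
  · intro a
    induction a using Fin.lastCases with
    | last =>
      simp only [Fin.lastCases_last]
      intro r hr
      obtain ⟨y, rfl⟩ := hmem_new r hr
      obtain ⟨S, hS, hrS⟩ := hr1 y
      exact Finset.mem_biUnion.mpr ⟨S, hS, hrS⟩
    | cast a =>
      simp only [Fin.lastCases_castSucc]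
      intro p hp
      obtain ⟨-, S, hS, hpS⟩ := hcell a p hp
      exact Finset.mem_biUnion.mpr ⟨S, hsub hS, hpS⟩

/-- prepend a new group before an `s'`-group formation whose cells all lie on `side`,
 using cells on `oside` of the letters involved -/
lemma extend_formation_front {s' : ℕ} (hs' : 0 < s') {k : ℕ}
    {L L1 : Finset (Finset (Cell d m n))}
    (hL : IsLetterFamily k L) (hsub : L1 ⊆ L)
    {G : Fin s' → Finset (Cell d m n)} (hG : FormationGroups P s' G)
    (hcell : ∀ a, ∀ p ∈ G a, side (cfst p) ∧ ∃ S ∈ L1, p ∈ S)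
    (hother : ∀ S ∈ L1, ∃ r ∈ S, oside (cfst r))
    (horder : ∀ x y : Fin m, oside x → side y → x < y) :
    ContainsFormation P (s'+1) (L.biUnion id) := by
  obtain ⟨hcard, ⟨g, hg, htails⟩, hord⟩ := hG
  set t : ((i : Fin d) → Fin (pdims i)) → ((i : Fin d) → Fin (BoxDims d m n i.succ)) :=
    fun y => fun i => g i (y i) with ht_def
  have a0 : Fin s' := ⟨0, hs'⟩
  have hch : ∀ y : {y // y ∈ P}, ∃ r : Cell d m n,
      (∃ S ∈ L, r ∈ S) ∧ oside (cfst r) ∧ Fin.tail r = t y.1 := by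
    rintro ⟨y, hy⟩
    have h1 : t y ∈ (G a0).image Fin.tail := by
      rw [htails a0]
      exact Finset.mem_image_of_mem _ hy
    obtain ⟨q, hq, hqt⟩ := Finset.mem_image.mp h1
    obtain ⟨-, S, hS, hqS⟩ := hcell a0 q hq
    obtain ⟨r, hrS, hro⟩ := hother S hS
    obtain ⟨-, t0, ht0⟩ := hL.2.2 S (hsub hS)
    exact ⟨r, ⟨S, hsub hS, hrS⟩, hro, by rw [ht0 r hrS, ← ht0 q hqS, hqt]⟩
  choose rf hr1 hr2 hr3 using hch
  set newG : Finset (Cell d m n) := P.attach.image rf with hnewG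
  have hmem_new : ∀ r ∈ newG, ∃ y : {y // y ∈ P}, rf y = r := by
    intro r hr
    obtain ⟨y, -, hy⟩ := Finset.mem_image.mp hr
    exact ⟨y, hy⟩
  refine ⟨Fin.cases newG G, ⟨?_, ⟨g, hg, ?_⟩, ?_⟩, ?_⟩
  · intro a
    induction a using Fin.cases with
    | zero =>
      simp only [Fin.cases_zero, hnewG]
      rw [Finset.card_image_of_injOn, Finset.card_attach]
      intro y _ y' _ h
      have : t y.1 = t y'.1 := by rw [← hr3 y, ← hr3 y', h]
      exact Subtype.ext (tfun_injOn hg this)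
    | succ a =>
      simp only [Fin.cases_succ]
      exact hcard a
  · intro a
    induction a using Fin.cases with
    | zero =>
      simp only [Fin.cases_zero]
      ext z
      simp only [Finset.mem_image, hnewG]
      constructor
      · rintro ⟨r, ⟨y, -, rfl⟩, rfl⟩
        exact ⟨y.1, y.2, (hr3 y).symm⟩
      · rintro ⟨y, hy, rfl⟩
        exact ⟨rf ⟨y, hy⟩, ⟨⟨y, hy⟩, Finset.mem_attach _ _, rfl⟩, hr3 ⟨y, hy⟩⟩
    | succ a =>
      simp only [Fin.cases_succ]
      exact htails a
  · intro a b hab p hp q hq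
    induction a using Fin.cases with
    | zero =>
      induction b using Fin.cases with
      | zero => exact absurd hab (lt_irrefl _)
      | succ b' =>
        simp only [Fin.cases_zero] at hp
        simp only [Fin.cases_succ] at hq
        obtain ⟨y, rfl⟩ := hmem_new p hp
        exact horder _ _ (hr2 y) (hcell b' q hq).1
    | succ a' =>
      induction b using Fin.cases with
      | zero => exact absurd hab (by simp [Fin.lt_def])
      | succ b' =>
        simp only [Fin.cases_succ] at hp hq
        refine hord a' b' ?_ p hp q hq
        rw [Fin.lt_def]
        have := hab
        rw [Fin.lt_def] at this
        simpa using this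
  · intro a
    induction a using Fin.cases with
    | zero =>
      simp only [Fin.cases_zero]
      intro r hr
      obtain ⟨y, rfl⟩ := hmem_new r hr
      obtain ⟨S, hS, hrS⟩ := hr1 y
      exact Finset.mem_biUnion.mpr ⟨S, hS, hrS⟩
    | succ a =>
      simp only [Fin.cases_succ]
      intro p hp
      obtain ⟨-, S, hS, hpS⟩ := hcell a p hp
      exact Finset.mem_biUnion.mpr ⟨S, hsub hS, hpS⟩

end Extend

end Stmt7Aux
namespace Stmt7Aux

section Recursion

variable {d n : ℕ} {pdims : Fin d → ℕ}

lemma lx_rec (P : Finset ((i : Fin d) → Fin (pdims i)))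
    (m1 m2 s' k k' : ℕ) (hm1 : 1 ≤ m1) (hm2 : 1 ≤ m2) (hs' : 1 ≤ s')
    (hk' : 1 ≤ k') (hkk : 2 * k' ≤ k + 1) :
    lxFormation n (m1 + m2) P (s'+1) k ≤
      lxFormation n m1 P (s'+1) k + lxFormation n m2 P (s'+1) k +
      lxFormation n m1 P s' k' + lxFormation n m2 P s' k' := by
  have hk1 : 1 ≤ k := by omega
  refine lx_le P ?_
  intro L hL havoid
  -- the reindexing maps
  have hmm : m1 ≤ m1 + m2 := Nat.le_add_right m1 m2
  set liftL : Fin m1 → Fin (m1 + m2) := Fin.castLE hmm with hliftL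
  have hmonoL : StrictMono liftL := by
    intro a b hab
    rw [Fin.lt_def] at hab ⊢
    exact hab
  set projL : Fin (m1 + m2) → Fin m1 := fun x => ⟨min (x : ℕ) (m1 - 1), by omega⟩ with hprojL
  have hlpL : ∀ x : Fin (m1 + m2), ((x : ℕ) < m1) → liftL (projL x) = x := by
    intro x hx
    apply Fin.ext
    show min (x : ℕ) (m1 - 1) = (x : ℕ)
    omega
  set liftR : Fin m2 → Fin (m1 + m2) := fun y => ⟨m1 + (y : ℕ), by omega⟩ with hliftR
  have hmonoR : StrictMono liftR := by
    intro a b hab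
    rw [Fin.lt_def] at hab ⊢
    show m1 + (a : ℕ) < m1 + (b : ℕ)
    omega
  set projR : Fin (m1 + m2) → Fin m2 :=
    fun x => ⟨min ((x : ℕ) - m1) (m2 - 1), by omega⟩ with hprojR
  have hlpR : ∀ x : Fin (m1 + m2), (m1 ≤ (x : ℕ)) → liftR (projR x) = x := by
    intro x hx
    apply Fin.ext
    have := x.isLt
    show m1 + min ((x : ℕ) - m1) (m2 - 1) = (x : ℕ)
    omega
  -- the four classes of letters
  set LA := L.filter (fun S => ∀ p ∈ S, ((cfst p : Fin (m1 + m2)) : ℕ) < m1) with hLA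
  set L2 := L.filter (fun S => ¬ ∀ p ∈ S, ((cfst p : Fin (m1 + m2)) : ℕ) < m1) with hL2
  set LB := L2.filter (fun S => ∀ p ∈ S, m1 ≤ ((cfst p : Fin (m1 + m2)) : ℕ)) with hLB
  set L3 := L2.filter (fun S => ¬ ∀ p ∈ S, m1 ≤ ((cfst p : Fin (m1 + m2)) : ℕ)) with hL3
  set LC := L3.filter
    (fun S => k' ≤ (S.filter (fun p => ((cfst p : Fin (m1 + m2)) : ℕ) < m1)).card) with hLC
  set LD := L3.filter
    (fun S => ¬ k' ≤ (S.filter (fun p => ((cfst p : Fin (m1 + m2)) : ℕ) < m1)).card) with hLD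
  have ecard : LA.card + LB.card + LC.card + LD.card = L.card := by
    have e1 := Finset.card_filter_add_card_filter_not
      (s := L) (p := fun S => ∀ p ∈ S, ((cfst p : Fin (m1 + m2)) : ℕ) < m1)
    have e2 := Finset.card_filter_add_card_filter_not
      (s := L2) (p := fun S => ∀ p ∈ S, m1 ≤ ((cfst p : Fin (m1 + m2)) : ℕ))
    have e3 := Finset.card_filter_add_card_filter_not
      (s := L3)
      (p := fun S => k' ≤ (S.filter (fun p => ((cfst p : Fin (m1 + m2)) : ℕ) < m1)).card)
    rw [← hLA, ← hL2] at e1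
    rw [← hLB, ← hL3] at e2
    rw [← hLC, ← hLD] at e3
    omega
  have hsubA : LA ⊆ L := Finset.filter_subset _ _
  have hsub2 : L2 ⊆ L := Finset.filter_subset _ _
  have hsubB : LB ⊆ L := (Finset.filter_subset _ _).trans hsub2
  have hsub3 : L3 ⊆ L := (Finset.filter_subset _ _).trans hsub2
  have hsubC : LC ⊆ L := (Finset.filter_subset _ _).trans hsub3
  have hsubD : LD ⊆ L := (Finset.filter_subset _ _).trans hsub3
  -- bound for LA
  have hcardA : ∀ S ∈ LA, k ≤ (S.filter (fun p => ((cfst p : Fin (m1+m2)) : ℕ) < m1)).card := by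
    intro S hS
    rw [hLA, Finset.mem_filter] at hS
    rw [Finset.filter_true_of_mem hS.2]
    exact (hL.2.2 S hS.1).1
  obtain ⟨hfamA, hcA⟩ := res_family liftL projL _ hlpL hL hsubA hk1 hcardA
  have havoidA : ¬ ContainsFormation P (s'+1)
      ((LA.image (res projL (fun x => (x : ℕ) < m1))).biUnion id) := by
    intro hcf
    obtain ⟨G, hG, hcell⟩ := res_formation liftL projL _ hlpL hmonoL hcf
    refine havoid ⟨G, hG, ?_⟩
    intro a p hp
    obtain ⟨-, S, hS, hpS⟩ := hcell a p hp
    exact Finset.mem_biUnion.mpr ⟨S, hsubA hS, hpS⟩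
  have hA : LA.card ≤ lxFormation n m1 P (s'+1) k := by
    rw [← hcA]
    exact le_lx P _ hfamA havoidA
  -- bound for LB
  have hcardB : ∀ S ∈ LB, k ≤ (S.filter (fun p => m1 ≤ ((cfst p : Fin (m1+m2)) : ℕ))).card := by
    intro S hS
    rw [hLB, Finset.mem_filter] at hS
    rw [Finset.filter_true_of_mem hS.2]
    exact (hL.2.2 S (hsub2 hS.1)).1
  obtain ⟨hfamB, hcB⟩ := res_family liftR projR _ hlpR hL hsubB hk1 hcardB
  have havoidB : ¬ ContainsFormation P (s'+1)
      ((LB.image (res projR (fun x => m1 ≤ (x : ℕ)))).biUnion id) := by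
    intro hcf
    obtain ⟨G, hG, hcell⟩ := res_formation liftR projR _ hlpR hmonoR hcf
    refine havoid ⟨G, hG, ?_⟩
    intro a p hp
    obtain ⟨-, S, hS, hpS⟩ := hcell a p hp
    exact Finset.mem_biUnion.mpr ⟨S, hsubB hS, hpS⟩
  have hB : LB.card ≤ lxFormation n m2 P (s'+1) k := by
    rw [← hcB]
    exact le_lx P _ hfamB havoidB
  -- bound for LC
  have hcardC : ∀ S ∈ LC, k' ≤ (S.filter (fun p => ((cfst p : Fin (m1+m2)) : ℕ) < m1)).card := by
    intro S hS
    rw [hLC, Finset.mem_filter] at hS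
    exact hS.2
  obtain ⟨hfamC, hcC⟩ := res_family liftL projL _ hlpL hL hsubC hk' hcardC
  have havoidC : ¬ ContainsFormation P s'
      ((LC.image (res projL (fun x => (x : ℕ) < m1))).biUnion id) := by
    intro hcf
    obtain ⟨G, hG, hcell⟩ := res_formation liftL projL _ hlpL hmonoL hcf
    refine havoid ?_
    refine extend_formation (side := fun x => (x : ℕ) < m1)
      (oside := fun x => m1 ≤ (x : ℕ))
      (lt_of_lt_of_le one_pos hs') hL hsubC hG hcell ?_ ?_
    · intro S hS
      have h3 : S ∈ L3 := Finset.mem_of_mem_filter S hS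
      rw [hL3, Finset.mem_filter] at h3
      have h2 : S ∈ L2 := h3.1
      rw [hL2, Finset.mem_filter] at h2
      push_neg at h2
      obtain ⟨p, hpS, hp⟩ := h2.2
      exact ⟨p, hpS, hp⟩
    · intro x y hx hy
      rw [Fin.lt_def]
      omega
  have hC : LC.card ≤ lxFormation n m1 P s' k' := by
    rw [← hcC]
    exact le_lx P _ hfamC havoidC
  -- bound for LD
  have hfilterRD : ∀ S : Finset (Cell d (m1+m2) n),
      (S.filter (fun p => m1 ≤ ((cfst p : Fin (m1+m2)) : ℕ))) =
      (S.filter (fun p => ¬ ((cfst p : Fin (m1+m2)) : ℕ) < m1)) := by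
    intro S
    apply Finset.filter_congr
    intro p _
    constructor <;> (intro; omega)
  have hcardD : ∀ S ∈ LD, k' ≤ (S.filter (fun p => m1 ≤ ((cfst p : Fin (m1+m2)) : ℕ))).card := by
    intro S hS
    rw [hLD, Finset.mem_filter] at hS
    have hSk : k ≤ S.card := (hL.2.2 S (hsub3 hS.1)).1
    have hsplit := Finset.card_filter_add_card_filter_not
      (s := S) (p := fun p => ((cfst p : Fin (m1+m2)) : ℕ) < m1)
    rw [hfilterRD S]
    omega
  obtain ⟨hfamD, hcD⟩ := res_family liftR projR _ hlpR hL hsubD hk' hcardD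
  have havoidD : ¬ ContainsFormation P s'
      ((LD.image (res projR (fun x => m1 ≤ (x : ℕ)))).biUnion id) := by
    intro hcf
    obtain ⟨G, hG, hcell⟩ := res_formation liftR projR _ hlpR hmonoR hcf
    refine havoid ?_
    refine extend_formation_front (side := fun x => m1 ≤ (x : ℕ))
      (oside := fun x => (x : ℕ) < m1)
      (lt_of_lt_of_le one_pos hs') hL hsubD hG hcell ?_ ?_
    · intro S hS
      have h3 : S ∈ L3 := Finset.mem_of_mem_filter S hS
      rw [hL3, Finset.mem_filter] at h3
      push_neg at h3
      obtain ⟨p, hpS, hp⟩ := h3.2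
      exact ⟨p, hpS, by omega⟩
    · intro x y hx hy
      rw [Fin.lt_def]
      omega
  have hD : LD.card ≤ lxFormation n m2 P s' k' := by
    rw [← hcD]
    exact le_lx P _ hfamD havoidD
  omega

end Recursion

end Stmt7Aux
namespace Stmt7Aux

section Base

variable {d n : ℕ} {pdims : Fin d → ℕ}

/-- the second smallest first coordinate of the cells of a letter -/
noncomputable def sndc {m : ℕ} (hm : 0 < m) (S : Finset (Cell d m n)) : Fin m :=
  ((S.image cfst).sort (· ≤ ·)).getD 1 ⟨0, hm⟩

lemma sndc_spec {m : ℕ} (hm : 0 < m) {S : Finset (Cell d m n)} (hS3 : 3 ≤ S.card)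
    {t : (i : Fin d) → Fin (BoxDims d m n i.succ)} (ht : ∀ p ∈ S, Fin.tail p = t) :
    (∃ pa ∈ S, cfst pa < sndc hm S) ∧ (∃ pb ∈ S, cfst pb = sndc hm S) ∧
      (∃ pc ∈ S, sndc hm S < cfst pc) := by
  have hinj : Set.InjOn (cfst (d := d) (n := n) (m := m)) ↑S := by
    intro p hp q hq h
    exact cell_eq h (by rw [← tail_eq_ctl, ← tail_eq_ctl, ht p hp, ht q hq])
  have hFcard : (S.image cfst).card = S.card := Finset.card_image_of_injOn hinj
  set F := S.image cfst with hF
  set l := F.sort (· ≤ ·) with hl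
  have hlen : l.length = F.card := Finset.length_sort _
  have hlen3 : 3 ≤ l.length := by omega
  have hsort : l.Pairwise (· < ·) := (Finset.sortedLT_sort F).pairwise
  have hpair := List.pairwise_iff_get.mp hsort
  have hgetD : sndc hm S = l.get ⟨1, by omega⟩ := by
    rw [sndc, ← hF, ← hl]
    exact List.getD_eq_getElem l _ (by omega)
  have hmemF : ∀ (j : ℕ) (hj : j < l.length), l.get ⟨j, hj⟩ ∈ F := by
    intro j hj
    have h1 : l.get ⟨j, hj⟩ ∈ l := List.get_mem l ⟨j, hj⟩
    generalize l.get ⟨j, hj⟩ = a at h1 ⊢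
    rw [hl] at h1
    exact (Finset.mem_sort _).mp h1
  have hpre : ∀ (j : ℕ) (hj : j < l.length), ∃ p ∈ S, cfst p = l.get ⟨j, hj⟩ := by
    intro j hj
    obtain ⟨p, hp, hpe⟩ := Finset.mem_image.mp (hmemF j hj)
    exact ⟨p, hp, hpe⟩
  refine ⟨?_, ?_, ?_⟩
  · obtain ⟨p, hp, hpe⟩ := hpre 0 (by omega)
    refine ⟨p, hp, ?_⟩
    rw [hpe, hgetD]
    exact hpair ⟨0, by omega⟩ ⟨1, by omega⟩ (by simp)
  · obtain ⟨p, hp, hpe⟩ := hpre 1 (by omega)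
    exact ⟨p, hp, by rw [hpe, hgetD]⟩
  · obtain ⟨p, hp, hpe⟩ := hpre 2 (by omega)
    refine ⟨p, hp, ?_⟩
    rw [hpe, hgetD]
    exact hpair ⟨1, by omega⟩ ⟨2, by omega⟩ (by simp [Fin.lt_def])
  

lemma lx_three (P : Finset ((i : Fin d) → Fin (pdims i))) {m : ℕ}
    (hm : 0 < m) (hn : 0 < n) :
    lxFormation n m P 3 3 ≤ exSq n P * m := by
  refine lx_le P ?_
  intro L hL havoid
  set junk : Cell d m n := cmk ⟨0, hm⟩ (fun _ => ⟨0, hn⟩) with hjunk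
  set τ : Finset (Cell d m n) → (Fin d → Fin n) :=
    fun S => if h : S.Nonempty then ctl h.choose else ctl junk with hτ
  have htau : ∀ S : Finset (Cell d m n), S.Nonempty → ∃ p ∈ S, ctl p = τ S := by
    intro S hS
    refine ⟨hS.choose, hS.choose_spec, ?_⟩
    rw [hτ]
    simp only [dif_pos hS]
  have hrow : ∀ S ∈ L, ∀ p ∈ S, ctl p = τ S := by
    intro S hS p hp
    obtain ⟨hk3, t, ht⟩ := hL.2.2 S hS
    obtain ⟨q, hq, hqe⟩ := htau S (hL.1 S hS)
    rw [← hqe, ← tail_eq_ctl, ← tail_eq_ctl, ht p hp, ht q hq]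
  have hfib := Finset.card_eq_sum_card_fiberwise
    (f := sndc (d := d) (n := n) hm) (s := L) (t := Finset.univ) (fun S _ => Finset.mem_univ _)
  have hbound : ∀ x : Fin m, (L.filter (fun S => sndc hm S = x)).card ≤ exSq n P := by
    intro x
    set Lx := L.filter (fun S => sndc hm S = x) with hLx
    have hmemLx : ∀ S ∈ Lx, S ∈ L ∧ sndc hm S = x := by
      intro S hS
      rw [hLx, Finset.mem_filter] at hS
      exact hS
    -- each letter in Lx has cells before, at, after x, all in its own row
    have hspec : ∀ S ∈ Lx, (∃ pa ∈ S, cfst pa < x) ∧ (∃ pb ∈ S, cfst pb = x) ∧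
        (∃ pc ∈ S, x < cfst pc) := by
      intro S hS
      obtain ⟨hSL, hsx⟩ := hmemLx S hS
      obtain ⟨hk3, t, ht⟩ := hL.2.2 S hSL
      have := sndc_spec hm hk3 ht
      rw [hsx] at this
      exact this
    have hinjτ : Set.InjOn τ ↑Lx := by
      intro S hS T hT he
      by_contra hne
      obtain ⟨hSL, hsx⟩ := hmemLx S hS
      obtain ⟨hTL, htx⟩ := hmemLx T hT
      obtain ⟨-, ⟨pb, hpb, hpbx⟩, -⟩ := hspec S hS
      obtain ⟨-, ⟨qb, hqb, hqbx⟩, -⟩ := hspec T hT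
      have hpq : pb = qb := by
        refine cell_eq (by rw [hpbx, hqbx]) ?_
        rw [hrow S hSL pb hpb, hrow T hTL qb hqb, he]
      exact (Finset.disjoint_left.mp (hL.2.1 S hSL T hTL hne) hpb) (hpq ▸ hqb)
    have hTcard : Lx.card = (Lx.image τ).card := (Finset.card_image_of_injOn hinjτ).symm
    have havoidT : ¬ MContains (Lx.image τ) P := by
      rintro ⟨f, hf, hfP⟩
      set tf : ((i : Fin d) → Fin (pdims i)) → (Fin d → Fin n) :=
        fun y => fun i => f i (y i) with htf
      have hch : ∀ y : {y // y ∈ P}, ∃ pa pb pc : Cell d m n,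
          (∃ S ∈ L, pa ∈ S ∧ pb ∈ S ∧ pc ∈ S) ∧
          cfst pa < x ∧ cfst pb = x ∧ x < cfst pc ∧
          ctl pa = tf y.1 ∧ ctl pb = tf y.1 ∧ ctl pc = tf y.1 := by
        rintro ⟨y, hy⟩
        have h1 : tf y ∈ Lx.image τ := hfP y hy
        obtain ⟨S, hSx, hSe⟩ := Finset.mem_image.mp h1
        obtain ⟨hSL, -⟩ := hmemLx S hSx
        obtain ⟨⟨pa, hpa, h2⟩, ⟨pb, hpb, h3⟩, ⟨pc, hpc, h4⟩⟩ := hspec S hSx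
        refine ⟨pa, pb, pc, ⟨S, hSL, hpa, hpb, hpc⟩, h2, h3, h4, ?_, ?_, ?_⟩ <;>
          simp only [hrow S hSL _ hpa, hrow S hSL _ hpb, hrow S hSL _ hpc, hSe]
      choose fa fb fc hmem hlt heq hgt hta htb htc using hch
      set G : Fin 3 → Finset (Cell d m n) :=
        ![P.attach.image fa, P.attach.image fb, P.attach.image fc] with hG
      have hfinj : Function.Injective tf := by
        intro y y' h
        funext i
        exact (hf i).injective (congrFun h i)
      have hinjf : ∀ (ff : {y // y ∈ P} → Cell d m n),
          (∀ y, ctl (ff y) = tf y.1) → Set.InjOn ff ↑P.attach := by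
        intro ff hff y _ y' _ h
        refine Subtype.ext (hfinj ?_)
        rw [← hff y, ← hff y', h]
      have hmain : ∀ (c : Fin 3) (r : Cell d m n), r ∈ G c →
          ((c : ℕ) = 0 ∧ (cfst r : ℕ) < (x : ℕ)) ∨
          ((c : ℕ) = 1 ∧ (cfst r : ℕ) = (x : ℕ)) ∨
          ((c : ℕ) = 2 ∧ (x : ℕ) < (cfst r : ℕ)) := by
        intro c r hr
        fin_cases c
        · have hr' : r ∈ P.attach.image fa := hr
          obtain ⟨y, -, rfl⟩ := Finset.mem_image.mp hr'
          exact Or.inl ⟨rfl, hlt y⟩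
        · have hr' : r ∈ P.attach.image fb := hr
          obtain ⟨y, -, rfl⟩ := Finset.mem_image.mp hr'
          exact Or.inr (Or.inl ⟨rfl, by rw [heq y]⟩)
        · have hr' : r ∈ P.attach.image fc := hr
          obtain ⟨y, -, rfl⟩ := Finset.mem_image.mp hr'
          exact Or.inr (Or.inr ⟨rfl, hgt y⟩)
      refine havoid ⟨G, ⟨?_, ⟨f, hf, ?_⟩, ?_⟩, ?_⟩
      · intro a
        fin_cases a
        · show (P.attach.image fa).card = P.card
          rw [Finset.card_image_of_injOn (hinjf fa hta), Finset.card_attach]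
        · show (P.attach.image fb).card = P.card
          rw [Finset.card_image_of_injOn (hinjf fb htb), Finset.card_attach]
        · show (P.attach.image fc).card = P.card
          rw [Finset.card_image_of_injOn (hinjf fc htc), Finset.card_attach]
      · have himg : ∀ (ff : {y // y ∈ P} → Cell d m n), (∀ y, ctl (ff y) = tf y.1) →
            (P.attach.image ff).image Fin.tail = P.image (fun y => fun i => f i (y i)) := by
          intro ff hff
          ext z
          constructor
          · intro hz
            obtain ⟨r, hr, rfl⟩ := Finset.mem_image.mp hz
            obtain ⟨y, -, rfl⟩ := Finset.mem_image.mp hr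
            exact Finset.mem_image.mpr ⟨y.1, y.2, (hff y).symm⟩
          · intro hz
            obtain ⟨y, hy, rfl⟩ := Finset.mem_image.mp hz
            exact Finset.mem_image.mpr
              ⟨ff ⟨y, hy⟩, Finset.mem_image.mpr ⟨⟨y, hy⟩, Finset.mem_attach _ _, rfl⟩, hff ⟨y, hy⟩⟩
        intro a
        fin_cases a
        · show (P.attach.image fa).image Fin.tail = _
          exact himg fa hta
        · show (P.attach.image fb).image Fin.tail = _
          exact himg fb htb
        · show (P.attach.image fc).image Fin.tail = _
          exact himg fc htc
      · intro a b hab p hp q hq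
        have h1 := hmain a p hp
        have h2 := hmain b q hq
        rw [Fin.lt_def] at hab
        show cfst p < cfst q
        rw [Fin.lt_def]
        rcases h1 with ⟨ha, hv⟩ | ⟨ha, hv⟩ | ⟨ha, hv⟩ <;>
          rcases h2 with ⟨hb, hw⟩ | ⟨hb, hw⟩ | ⟨hb, hw⟩ <;> omega
      · intro a
        have hsubG : ∀ (ff : {y // y ∈ P} → Cell d m n),
            (∀ y : {y // y ∈ P}, ∃ S ∈ L, ff y ∈ S) →
            P.attach.image ff ⊆ L.biUnion id := by
          intro ff hff r hr
          obtain ⟨y, -, rfl⟩ := Finset.mem_image.mp hr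
          obtain ⟨S, hS, hrS⟩ := hff y
          exact Finset.mem_biUnion.mpr ⟨S, hS, hrS⟩
        fin_cases a
        · show P.attach.image fa ⊆ _
          refine hsubG fa ?_
          intro y
          obtain ⟨S, hS, h1, -, -⟩ := hmem y
          exact ⟨S, hS, h1⟩
        · show P.attach.image fb ⊆ _
          refine hsubG fb ?_
          intro y
          obtain ⟨S, hS, -, h1, -⟩ := hmem y
          exact ⟨S, hS, h1⟩
        · show P.attach.image fc ⊆ _
          refine hsubG fc ?_
          intro y
          obtain ⟨S, hS, -, -, h1⟩ := hmem y
          exact ⟨S, hS, h1⟩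
    calc Lx.card = (Lx.image τ).card := hTcard
      _ ≤ exSq n P := card_le_exSq P _ havoidT
  calc L.card = ∑ x ∈ Finset.univ, (L.filter (fun S => sndc hm S = x)).card := hfib
    _ ≤ Finset.univ.card • exSq n P := Finset.sum_le_card_nsmul _ _ _ (fun x _ => hbound x)
    _ = exSq n P * m := by
      rw [Finset.card_univ, Fintype.card_fin, smul_eq_mul, Nat.mul_comm]

end Base

end Stmt7Aux
namespace Stmt7Aux

variable {d n : ℕ} {pdims : Fin d → ℕ}

lemma main_bound (P : Finset ((i : Fin d) → Fin (pdims i))) (hn : 0 < n) :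
    ∀ s, 3 ≤ s → ∀ m, 1 ≤ m →
      lxFormation n m P s (2 ^ (s - 2) + 1) ≤
        exSq n P * m * (1 + Nat.clog 2 m) ^ (s - 3) := by
  intro s hs
  induction s, hs using Nat.le_induction with
  | base =>
    intro m hm
    simpa using lx_three P (by omega) hn
  | succ s hs ih =>
    obtain ⟨u, rfl⟩ : ∃ u, s = u + 3 := ⟨s - 3, by omega⟩
    intro m
    induction m using Nat.strong_induction_on with
    | _ m ihm =>
      intro hm
      rcases Nat.lt_or_ge m 2 with h2 | h2
      · have hm1 : m = 1 := by omega
        subst hm1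
        rw [lx_small P le_rfl (by have := Nat.one_le_two_pow (n := u + 3 + 1 - 2); omega)]
        exact Nat.zero_le _
      · -- split m = m1 + m2
        set m1 := (m + 1) / 2 with hm1def
        set m2 := m / 2 with hm2def
        have hm12 : m1 + m2 = m := by omega
        have hm1p : 1 ≤ m1 := by omega
        have hm2p : 1 ≤ m2 := by omega
        have hm1lt : m1 < m := by omega
        have hm2lt : m2 < m := by omega
        have hkk : 2 * (2 ^ (u+1) + 1) ≤ (2 ^ (u+2) + 1) + 1 := by
          have hp : (2:ℕ) ^ (u+2) = 2 * 2 ^ (u+1) := by rw [pow_succ]; ring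
          omega
        have hrec : lxFormation n m P (u+3+1) (2 ^ (u+2) + 1) ≤
            lxFormation n m1 P ((u+3)+1) (2 ^ (u+2) + 1) +
            lxFormation n m2 P ((u+3)+1) (2 ^ (u+2) + 1) +
            lxFormation n m1 P (u+3) (2 ^ (u+1) + 1) +
            lxFormation n m2 P (u+3) (2 ^ (u+1) + 1) := by
          rw [← hm12]
          exact lx_rec P m1 m2 (u+3) _ _ hm1p hm2p (by omega) (by omega) hkk
        have b1 := ihm m1 hm1lt hm1p
        have b2 := ihm m2 hm2lt hm2p
        have b3 := ih m1 hm1p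
        have b4 := ih m2 hm2p
        have hclog : Nat.clog 2 m = Nat.clog 2 m1 + 1 := by
          have h' := Nat.clog_of_two_le (b := 2) (n := m) one_lt_two h2
          have he : (m + 2 - 1) / 2 = m1 := by omega
          rw [he] at h'
          exact h'
        have hc2 : Nat.clog 2 m2 ≤ Nat.clog 2 m1 := Nat.clog_mono_right 2 (by omega)
        set c := Nat.clog 2 m with hc
        set E := exSq n P with hE
        have e1 : 1 + Nat.clog 2 m1 = c := by omega
        have e2 : 1 + Nat.clog 2 m2 ≤ c := by omega
        rw [e1] at b1 b3
        have b2' : lxFormation n m2 P ((u+3)+1) (2 ^ (u+2) + 1) ≤ E * m2 * c ^ (u+1) :=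
          le_trans b2 (Nat.mul_le_mul_left _ (Nat.pow_le_pow_left e2 _))
        have b4' : lxFormation n m2 P (u+3) (2 ^ (u+1) + 1) ≤ E * m2 * c ^ u :=
          le_trans b4 (Nat.mul_le_mul_left _ (Nat.pow_le_pow_left e2 _))
        have hsum : E * m1 * c ^ (u+1) + E * m2 * c ^ (u+1) + E * m1 * c ^ u + E * m2 * c ^ u
            = E * m * (c ^ (u+1) + c ^ u) := by
          rw [← hm12]; ring
        have hpow : c ^ (u+1) + c ^ u ≤ (1 + c) ^ (u+1) := by
          calc c ^ (u+1) + c ^ u = c ^ u * (c + 1) := by ring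
            _ ≤ (1 + c) ^ u * (1 + c) :=
                Nat.mul_le_mul (Nat.pow_le_pow_left (by omega) u) (by omega)
            _ = (1 + c) ^ (u+1) := (pow_succ _ _).symm
        calc lxFormation n m P (u+3+1) (2 ^ (u+3+1-2) + 1)
            ≤ lxFormation n m1 P ((u+3)+1) (2 ^ (u+2) + 1) +
              lxFormation n m2 P ((u+3)+1) (2 ^ (u+2) + 1) +
              lxFormation n m1 P (u+3) (2 ^ (u+1) + 1) +
              lxFormation n m2 P (u+3) (2 ^ (u+1) + 1) := hrec
          _ ≤ E * m1 * c ^ (u+1) + E * m2 * c ^ (u+1) + E * m1 * c ^ u + E * m2 * c ^ u :=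
              add_le_add (add_le_add (add_le_add b1 b2') b3) b4'
          _ = E * m * (c ^ (u+1) + c ^ u) := hsum
          _ ≤ E * m * (1 + c) ^ (u+1) := Nat.mul_le_mul_left _ hpow

end Stmt7Aux

/-- for every `s ≥ 3` there is a constant `C` (depending only on `s`) such that
for every positive `d`, every `d`-dimensional 0-1 matrix `P` with at least one one, all
`m ≥ 2`, `n ≥ 1`, with `k = 2^{s-2} + 1`:
`lx_k(n, m, F_{P,s}, d+1) ≤ C · ex(n, P, d) · m · (1 + log₂ m)^{s-3}`. -/
theorem stmt7 (s : ℕ) (hs : 3 ≤ s) :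
    ∃ C : ℝ, 0 < C ∧ ∀ (d : ℕ), 0 < d → ∀ (pdims : Fin d → ℕ)
      (P : Finset ((i : Fin d) → Fin (pdims i))), P.Nonempty →
      ∀ m n : ℕ, 2 ≤ m → 1 ≤ n →
        (lxFormation n m P s (2 ^ (s - 2) + 1) : ℝ)
          ≤ C * (exSq n P : ℝ) * (m : ℝ) * (1 + Real.logb 2 (m : ℝ)) ^ (s - 3) := by
  refine ⟨2 ^ (s - 3), by positivity, ?_⟩
  intro d hd pdims P hP m n hm hn
  have h1 := Stmt7Aux.main_bound P (by omega : 0 < n) s hs m (by omega)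
  have h1' : (lxFormation n m P s (2 ^ (s - 2) + 1) : ℝ) ≤
      (exSq n P : ℝ) * (m : ℝ) * (1 + (Nat.clog 2 m : ℝ)) ^ (s - 3) := by
    have h2 := Nat.cast_le (α := ℝ) |>.mpr h1
    push_cast at h2
    exact h2
  have hc1 : 0 < Nat.clog 2 m := Nat.clog_pos one_lt_two hm
  have hple := Nat.pow_pred_clog_lt_self (b := 2) one_lt_two (show 1 < m from hm)
  rw [Nat.pred_eq_sub_one] at hple
  have hcast : ((2:ℝ)) ^ (Nat.clog 2 m - 1) ≤ (m : ℝ) := by exact_mod_cast hple.le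
  have hlogb : ((Nat.clog 2 m : ℝ) - 1) ≤ Real.logb 2 (m : ℝ) := by
    have h3 : Real.logb 2 ((2:ℝ) ^ (Nat.clog 2 m - 1)) ≤ Real.logb 2 (m : ℝ) :=
      Real.logb_le_logb_of_le one_lt_two (by positivity) hcast
    rw [Real.logb_pow, Real.logb_self_eq_one one_lt_two] at h3
    rw [Nat.cast_sub hc1] at h3
    simpa using h3
  have hlognn : 0 ≤ Real.logb 2 (m : ℝ) :=
    Real.logb_nonneg one_lt_two (by exact_mod_cast Nat.one_le_of_lt hm)
  have key : (1 + (Nat.clog 2 m : ℝ)) ≤ 2 * (1 + Real.logb 2 (m : ℝ)) := by nlinarith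
  have hpowle : (1 + (Nat.clog 2 m : ℝ)) ^ (s - 3) ≤
      (2 * (1 + Real.logb 2 (m : ℝ))) ^ (s - 3) :=
    pow_le_pow_left₀ (by positivity) key _
  calc (lxFormation n m P s (2 ^ (s - 2) + 1) : ℝ)
      ≤ (exSq n P : ℝ) * (m : ℝ) * (1 + (Nat.clog 2 m : ℝ)) ^ (s - 3) := h1'
    _ ≤ (exSq n P : ℝ) * (m : ℝ) * (2 * (1 + Real.logb 2 (m : ℝ))) ^ (s - 3) :=
        mul_le_mul_of_nonneg_left hpowle (by positivity)
    _ = 2 ^ (s - 3) * (exSq n P : ℝ) * (m : ℝ) * (1 + Real.logb 2 (m : ℝ)) ^ (s - 3) := by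
        rw [mul_pow]; ring
end
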